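/- arXiv:1107.1922 — 8 statements merged into one kernel-verified Lean document; each statement's English description precedes it below -/
import Mathlib

section
/- There exist constants C, c > 0, depending only on γ, β, μ, such that for every k ∈ ℝ³ and every solution (n̂,û,Ê,B̂) of the Fourier-transformed linearized Navier–Stokes–Maxwell system at frequency k, one has for all t ≥ 0: |Û(t,k)|² ≤ C·exp(−c|k|⁴t/(1+|k|²)³)·|Û(0,k)|². -/
noncomputable section

/-- `ℝ³` as a Euclidean space. -/
abbrev E3 := EuclideanSpace ℝ (Fin 3)

/-- Complex cross product of two vectors in `ℂ³`. -/
def crossC (a b : Fin 3 → ℂ) : Fin 3 → ℂ :=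
  ![a 1 * b 2 - a 2 * b 1, a 2 * b 0 - a 0 * b 2, a 0 * b 1 - a 1 * b 0]

/-- Bilinear (non-hermitian) dot product on `ℂ³`. -/
def dotC (a b : Fin 3 → ℂ) : ℂ := ∑ i, a i * b i

/-- Hermitian dot product `(a | b) = Σ aᵢ conj(bᵢ)` on `ℂ³`. -/
def hdotC (a b : Fin 3 → ℂ) : ℂ := ∑ i, a i * (starRingEnd ℂ) (b i)

/-- The complexification of a real vector `k ∈ ℝ³`. -/
def vecC (k : E3) : Fin 3 → ℂ := fun i => ((k i : ℝ) : ℂ)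

/-- `(n̂,û,Ê,B̂)` solves the Fourier-transformed linearized
Navier–Stokes–Maxwell system at frequency `k`:
`∂ₜn̂ + γik·û = 0`, `∂ₜû + γik n̂ + βÊ + μ|k|²û = 0`,
`∂ₜÊ − ik×B̂ − βû = 0`, `∂ₜB̂ + ik×Ê = 0`,
with the constraints `ik·Ê = −(β/γ)n̂` and `k·B̂ = 0`, for `t ≥ 0`. -/
structure FourierNSMSol (γ β μ : ℝ) (k : E3)
    (n : ℝ → ℂ) (u E B : ℝ → Fin 3 → ℂ) : Prop where
  hn : ∀ t : ℝ, 0 ≤ t → HasDerivWithinAt n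
    (-((γ:ℂ) * Complex.I * dotC (vecC k) (u t))) (Set.Ici 0) t
  hu : ∀ t : ℝ, 0 ≤ t → ∀ i, HasDerivWithinAt (fun s => u s i)
    (-((γ:ℂ) * Complex.I * ((k i : ℝ):ℂ) * n t) - (β:ℂ) * E t i
      - ((μ * ‖k‖^2 : ℝ):ℂ) * u t i) (Set.Ici 0) t
  hE : ∀ t : ℝ, 0 ≤ t → ∀ i, HasDerivWithinAt (fun s => E s i)
    (Complex.I * crossC (vecC k) (B t) i + (β:ℂ) * u t i) (Set.Ici 0) t
  hB : ∀ t : ℝ, 0 ≤ t → ∀ i, HasDerivWithinAt (fun s => B s i)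
    (-(Complex.I * crossC (vecC k) (E t) i)) (Set.Ici 0) t
  hdivE : ∀ t : ℝ, 0 ≤ t →
    Complex.I * dotC (vecC k) (E t) = -(((β/γ : ℝ)):ℂ) * n t
  hdivB : ∀ t : ℝ, 0 ≤ t → dotC (vecC k) (B t) = 0

/-- `|Û|² = |n̂|² + |û|² + |Ê|² + |B̂|²`. -/
def UsqNorm (n : ℂ) (u E B : Fin 3 → ℂ) : ℝ :=
  Complex.normSq n + ∑ i, Complex.normSq (u i) + ∑ i, Complex.normSq (E i)
    + ∑ i, Complex.normSq (B i)

/-- The time-frequency Lyapunov functional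
`ℰ(Û) = |Û|² + κ₁Re(iγkn̂|û)/(1+|k|²) + κ₁|k|²Re(Ê|û)/(1+|k|²)²
      + κ₁κ₂|k|²Re(−ik×B̂|Ê)/(1+|k|²)³`. -/
def lyapE (κ₁ κ₂ γ : ℝ) (k : E3) (n : ℂ) (u E B : Fin 3 → ℂ) : ℝ :=
  UsqNorm n u E B
  + κ₁ * (hdotC (fun i => Complex.I * (γ:ℂ) * ((k i : ℝ):ℂ) * n) u).re / (1 + ‖k‖^2)
  + κ₁ * ‖k‖^2 * (hdotC E u).re / (1 + ‖k‖^2)^2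
  + κ₁ * κ₂ * ‖k‖^2
      * (hdotC (fun i => -(Complex.I * crossC (vecC k) B i)) E).re / (1 + ‖k‖^2)^3

set_option maxHeartbeats 2000000

section Aux
open Complex ComplexConjugate Set

lemma le_of_sq_le_sq' {a b : ℝ} (h : a^2 ≤ b^2) (hb : 0 ≤ b) : a ≤ b := by
  nlinarith [h, hb]

lemma reSq_le_normSq (z : ℂ) : z.re^2 ≤ Complex.normSq z := by
  rw [Complex.normSq_apply]; nlinarith [sq_nonneg z.im]

lemma norm_sq_E3 (k : E3) : ‖k‖^2 = ∑ i, (k i)^2 := by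
  rw [EuclideanSpace.norm_eq, Real.sq_sqrt (by positivity)]
  congr 1; ext i; rw [Real.norm_eq_abs, _root_.sq_abs]

lemma normSq_hdotC_le (a b : Fin 3 → ℂ) :
    Complex.normSq (hdotC a b) ≤ (∑ i, Complex.normSq (a i)) * (∑ i, Complex.normSq (b i)) := by
  set a' : EuclideanSpace ℂ (Fin 3) := (WithLp.equiv 2 (Fin 3 → ℂ)).symm a with ha'
  set b' : EuclideanSpace ℂ (Fin 3) := (WithLp.equiv 2 (Fin 3 → ℂ)).symm b with hb'
  have h := @norm_inner_le_norm ℂ (EuclideanSpace ℂ (Fin 3)) _ _ _ b' a'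
  have hi : (inner (𝕜 := ℂ) b' a') = hdotC a b := by
    simp [PiLp.inner_apply, hdotC, RCLike.inner_apply, mul_comm, ha', hb']
  rw [hi] at h
  have hna : ‖a'‖^2 = ∑ i, Complex.normSq (a i) := by
    rw [EuclideanSpace.norm_eq, Real.sq_sqrt (by positivity)]
    congr 1; ext i
    rw [← Complex.sq_norm]
    simp [ha']
  have hnb : ‖b'‖^2 = ∑ i, Complex.normSq (b i) := by
    rw [EuclideanSpace.norm_eq, Real.sq_sqrt (by positivity)]
    congr 1; ext i
    rw [← Complex.sq_norm]
    simp [hb']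
  calc Complex.normSq (hdotC a b) = ‖hdotC a b‖^2 := by
        rw [← Complex.sq_norm]
    _ ≤ (‖b'‖ * ‖a'‖)^2 := by
        apply sq_le_sq' <;> nlinarith [norm_nonneg (hdotC a b), mul_nonneg (norm_nonneg b') (norm_nonneg a')]
    _ = _ := by rw [mul_pow, hna, hnb]; ring

lemma lagrange (k : E3) (B : Fin 3 → ℂ) :
    (∑ i, Complex.normSq (crossC (vecC k) B i)) + Complex.normSq (dotC (vecC k) B)
      = (∑ i, (k i)^2) * ∑ i, Complex.normSq (B i) := by
  simp only [crossC, dotC, vecC, Fin.sum_univ_three, Matrix.cons_val_zero, Matrix.cons_val_one,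
    Matrix.head_cons, Matrix.cons_val_two, Matrix.tail_cons, Complex.normSq_apply]
  simp only [Complex.add_re, Complex.add_im, Complex.mul_re, Complex.mul_im, Complex.sub_re,
    Complex.sub_im, Complex.ofReal_re, Complex.ofReal_im]
  ring

lemma arith_core (γ β μ κ₁ δ R S N U F G P X W Y : ℝ)
    (hγ : 0 < γ) (hβ : 0 < β) (hμ : 0 < μ) (hκ₁ : 0 < κ₁)
    (hA : κ₁ * (γ^2 + μ^2/2 + β + 4/β + μ^2/β + β^3/4) ≤ μ)
    (hδ0 : 0 ≤ δ) (hδμ : δ ≤ μ) (hδN : δ ≤ κ₁*β^2) (hδF : δ ≤ κ₁*β/2) (hδG : δ ≤ κ₁*β/8)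
    (hS : S = 1 + R) (hR0 : 0 ≤ R)
    (hN0 : 0 ≤ N) (hU0 : 0 ≤ U) (hF0 : 0 ≤ F) (hG0 : 0 ≤ G) (hP0 : 0 ≤ P)
    (hPU : P ≤ R*U) (hXP : X^2 ≤ N*P) (hWFU : W^2 ≤ F*U) (hYGU : Y^2 ≤ (R*G)*U) :
    -2*(μ*R)*U + κ₁/S*(γ^2*P - (γ^2*R + β^2)*N + μ*γ*R*X)
      + κ₁*R/S^2*(Y + β*U - β*N - β*F - μ*R*W)
      + κ₁*(β/4)*R/S^3*(R*F - (β/γ)^2*N - R*G - β*Y)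
      ≤ -(δ * R^2 * (N+U+F+G) / S^3) := by
  have hγ0 : γ ≠ 0 := ne_of_gt hγ
  have hβ0 : β ≠ 0 := ne_of_gt hβ
  have hS0 : (0:ℝ) < S := by rw [hS]; linarith
  have hS1 : (1:ℝ) ≤ S := by rw [hS]; linarith
  have hRS : R ≤ S := by rw [hS]; linarith
  have hS23 : S^2 ≤ S^3 := by nlinarith [hS1, hS0.le]
  have hR2S2 : R^2 ≤ S^2 := by nlinarith [hR0, hRS]
  have hRS3 : R ≤ S^3 := by nlinarith [hS1, hS0.le, hRS, hR0]
  have hRS2 : R^2*S^2 ≤ R*S^3 := by linarith [mul_le_mul_of_nonneg_left hRS (by positivity : (0:ℝ) ≤ R*S^2)]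
  have hRUS1 : R*U ≤ R*U*S^3 := by linarith [mul_le_mul_of_nonneg_left (by nlinarith [hS1, hS0.le] : (1:ℝ) ≤ S^3) (by positivity : (0:ℝ) ≤ R*U)]
  have cX : 2*(μ*γ)*X ≤ γ^2*N + μ^2*P := by
    apply le_of_sq_le_sq'
    · linarith [mul_le_mul_of_nonneg_left hXP (by positivity : (0:ℝ) ≤ 4*μ^2*γ^2),
        sq_nonneg (γ^2*N - μ^2*P)]
    · linarith [mul_nonneg (sq_nonneg γ) hN0, mul_nonneg (sq_nonneg μ) hP0]
  have cY1 : 16*β*(S*Y) ≤ β^2*(R*G) + 64*(S^2*U) := by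
    apply le_of_sq_le_sq'
    · linarith [mul_le_mul_of_nonneg_left hYGU (by positivity : (0:ℝ) ≤ 256*β^2*S^2),
        sq_nonneg (β^2*(R*G) - 64*(S^2*U))]
    · linarith [mul_nonneg (mul_nonneg (sq_nonneg β) hR0) hG0, mul_nonneg (sq_nonneg S) hU0]
  have cY2 : 4*β*(-Y) ≤ R*G + 4*β^2*U := by
    apply le_of_sq_le_sq'
    · linarith [mul_le_mul_of_nonneg_left hYGU (by positivity : (0:ℝ) ≤ 16*β^2),
        sq_nonneg (R*G - 4*β^2*U)]
    · linarith [mul_nonneg hR0 hG0, mul_nonneg (sq_nonneg β) hU0]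
  have cW : 4*(β*μ*S)*(-W) ≤ β^2*F + 4*(μ^2*S^2)*U := by
    apply le_of_sq_le_sq'
    · linarith [mul_le_mul_of_nonneg_left hWFU (by positivity : (0:ℝ) ≤ 16*β^2*μ^2*S^2),
        sq_nonneg (β^2*F - 4*(μ^2*S^2)*U)]
    · linarith [mul_nonneg (sq_nonneg β) hF0, mul_nonneg (mul_nonneg (sq_nonneg μ) (sq_nonneg S)) hU0]
  have hm1 : κ₁*S^2*(γ^2*P) ≤ κ₁*γ^2*(R*U*S^3) := by
    linarith [mul_le_mul_of_nonneg_left hPU (by positivity : (0:ℝ) ≤ κ₁*γ^2*S^2),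
      mul_le_mul_of_nonneg_left hS23 (by positivity : (0:ℝ) ≤ κ₁*γ^2*(R*U))]
  have hm2 : κ₁*S^2*(μ*γ*R*X) ≤ κ₁*(γ^2*R*N*S^2)/2 + κ₁*μ^2/2*(R*U*S^3) := by
    linarith [mul_le_mul_of_nonneg_left cX (by positivity : (0:ℝ) ≤ κ₁*S^2*R/2),
      mul_le_mul_of_nonneg_left hPU (by positivity : (0:ℝ) ≤ κ₁*μ^2*S^2*R/2),
      mul_le_mul_of_nonneg_left hRS2 (by positivity : (0:ℝ) ≤ κ₁*μ^2*U/2)]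
  have hm3 : κ₁*(R*S*Y) ≤ κ₁*β/16*(R^2*G) + κ₁*(4/β)*(R*U*S^3) := by
    rw [← mul_le_mul_iff_right₀ hβ]
    have e : β * (κ₁*β/16*(R^2*G) + κ₁*(4/β)*(R*U*S^3))
        = κ₁*β^2/16*(R^2*G) + 4*κ₁*(R*U*S^3) := by field_simp
    rw [e]
    linarith [mul_le_mul_of_nonneg_left cY1 (by positivity : (0:ℝ) ≤ κ₁*R/16),
      mul_le_mul_of_nonneg_left hS23 (by positivity : (0:ℝ) ≤ 4*κ₁*(R*U))]
  have hm4 : -(κ₁*β^2/4*(R*Y)) ≤ κ₁*β/16*(R^2*G) + κ₁*β^3/4*(R*U*S^3) := by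
    linarith [mul_le_mul_of_nonneg_left cY2 (by positivity : (0:ℝ) ≤ κ₁*β*R/16),
      mul_le_mul_of_nonneg_left hRUS1 (by positivity : (0:ℝ) ≤ κ₁*β^3/4)]
  have hm5 : -(κ₁*μ*(R^2*S*W)) ≤ κ₁*β/4*(R^2*F) + κ₁*(μ^2/β)*(R*U*S^3) := by
    rw [← mul_le_mul_iff_right₀ hβ]
    have e : β * (κ₁*β/4*(R^2*F) + κ₁*(μ^2/β)*(R*U*S^3))
        = κ₁*β^2/4*(R^2*F) + κ₁*μ^2*(R*U*S^3) := by field_simp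
    rw [e]
    linarith [mul_le_mul_of_nonneg_left cW (by positivity : (0:ℝ) ≤ κ₁*R^2/4),
      mul_le_mul_of_nonneg_left hRS2 (by positivity : (0:ℝ) ≤ κ₁*μ^2*U)]
  have hm6 : κ₁*(R*S*(β*U)) ≤ κ₁*β*(R*U*S^3) := by
    linarith [mul_le_mul_of_nonneg_left (show S ≤ S^3 by nlinarith [hS1, hS0.le]) (by positivity : (0:ℝ) ≤ κ₁*β*(R*U))]
  have hARUS : κ₁*(γ^2 + μ^2/2 + β + 4/β + μ^2/β + β^3/4)*(R*U*S^3) ≤ μ*(R*U*S^3) :=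
    mul_le_mul_of_nonneg_right hA (by positivity)
  have hUdiss : μ*(R^2*U) ≤ μ*(R*U*S^3) := by
    linarith [mul_le_mul_of_nonneg_left hRS3 (by positivity : (0:ℝ) ≤ μ*R*U),
      mul_le_mul_of_nonneg_right (mul_le_mul_of_nonneg_left hRS3 hμ.le) hU0]
  have hd1 : δ*(R^2*U) ≤ μ*(R^2*U) := by
    linarith [mul_le_mul_of_nonneg_right hδμ (by positivity : (0:ℝ) ≤ R^2*U)]
  have hdN : δ*(R^2*N) ≤ κ₁*β^2*(S^2*N) := by
    linarith [mul_le_mul_of_nonneg_right hδN (by positivity : (0:ℝ) ≤ R^2*N),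
      mul_le_mul_of_nonneg_right (mul_le_mul_of_nonneg_left hR2S2 (by positivity : (0:ℝ) ≤ κ₁*β^2)) hN0]
  have hdF : δ*(R^2*F) ≤ κ₁*β/2*(R^2*F) := by
    linarith [mul_le_mul_of_nonneg_right hδF (by positivity : (0:ℝ) ≤ R^2*F)]
  have hFs : κ₁*β*(R^2*F) ≤ κ₁*β*(R*S*F) := by
    linarith [mul_le_mul_of_nonneg_right (mul_le_mul_of_nonneg_left hRS (by positivity : (0:ℝ) ≤ κ₁*β*R)) hF0]
  have hdG : δ*(R^2*G) ≤ κ₁*β/8*(R^2*G) := by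
    linarith [mul_le_mul_of_nonneg_right hδG (by positivity : (0:ℝ) ≤ R^2*G)]
  have hposN1 : 0 ≤ κ₁*γ^2*(R*S^2*N) := by positivity
  have hposN2 : 0 ≤ κ₁*β*(R*S*N) := by positivity
  have hposN3 : 0 ≤ κ₁*(β/4)*R*((β/γ)^2*N) := by positivity
  rw [show -(δ * R^2 * (N+U+F+G) / S^3) = (-(δ * R^2 * (N+U+F+G))) / S^3 by ring]
  rw [le_div_iff₀ (by positivity : (0:ℝ) < S^3)]
  have expand : (-2*(μ*R)*U + κ₁/S*(γ^2*P - (γ^2*R + β^2)*N + μ*γ*R*X)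
      + κ₁*R/S^2*(Y + β*U - β*N - β*F - μ*R*W)
      + κ₁*(β/4)*R/S^3*(R*F - (β/γ)^2*N - R*G - β*Y)) * S^3
      = (-2*(μ*R)*U*S^3 + κ₁*S^2*(γ^2*P - (γ^2*R + β^2)*N + μ*γ*R*X)
      + κ₁*R*S*(Y + β*U - β*N - β*F - μ*R*W)
      + κ₁*(β/4)*R*(R*F - R*G - β*Y)) - κ₁*(β/4)*R*((β/γ)^2*N) := by
    field_simp
    ring
  rw [expand]
  linarith [hm1, hm2, hm3, hm4, hm5, hm6, hARUS, hUdiss, hd1, hdN, hdF, hFs, hdG,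
    hposN1, hposN2, hposN3]


lemma equiv_core (κ₁ κ₂ γ R S N U F G y1 y2 y3 : ℝ)
    (hκ₁ : 0 ≤ κ₁) (hκ₂ : 0 ≤ κ₂) (hγ : 0 ≤ γ) (hS : S = 1 + R) (hR0 : 0 ≤ R)
    (hN0 : 0 ≤ N) (hU0 : 0 ≤ U) (hF0 : 0 ≤ F) (hG0 : 0 ≤ G)
    (h1 : y1^2 ≤ γ^2*R*N*U) (h2 : y2^2 ≤ F*U) (h3 : y3^2 ≤ R*G*F) :
    |κ₁*y1/S + κ₁*R*y2/S^2 + κ₁*κ₂*R*y3/S^3| ≤ κ₁*(γ + 1 + κ₂)/2 * (N+U+F+G) := by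
  have hS0 : (0:ℝ) < S := by rw [hS]; linarith
  have hS1 : (1:ℝ) ≤ S := by rw [hS]; linarith
  have hRS : R ≤ S := by rw [hS]; linarith
  have hb1 : y1 ≤ γ*S*((N+U)/2) ∧ -y1 ≤ γ*S*((N+U)/2) := by
    have hnn : (0:ℝ) ≤ γ*S*((N+U)/2) := mul_nonneg (mul_nonneg hγ hS0.le) (by linarith)
    have hcert : y1^2 ≤ (γ*S*((N+U)/2))^2 := by
      nlinarith [h1, mul_nonneg (sq_nonneg γ) (mul_nonneg hN0 hU0),
        mul_le_mul_of_nonneg_right (mul_le_mul_of_nonneg_left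
          (hRS.trans (by nlinarith : S ≤ S^2)) (sq_nonneg γ)) (mul_nonneg hN0 hU0),
        mul_nonneg (mul_nonneg (sq_nonneg γ) (sq_nonneg S)) (sq_nonneg (N - U))]
    exact ⟨le_of_sq_le_sq' hcert hnn, le_of_sq_le_sq' (by nlinarith [hcert]) hnn⟩
  have hb2 : R*y2 ≤ S^2*((F+U)/2) ∧ -(R*y2) ≤ S^2*((F+U)/2) := by
    have hnn : (0:ℝ) ≤ S^2*((F+U)/2) := mul_nonneg (by positivity) (by linarith)
    have hR2S4 : R^2 ≤ S^4 := by
      have ha : R^2 ≤ S^2 := pow_le_pow_left₀ hR0 hRS 2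
      have hb : (1:ℝ) ≤ S^2 := by nlinarith [hS1, hS0.le]
      nlinarith [ha, mul_le_mul_of_nonneg_left hb (by positivity : (0:ℝ) ≤ S^2)]
    have hcert : (R*y2)^2 ≤ (S^2*((F+U)/2))^2 := by
      nlinarith [mul_le_mul_of_nonneg_left h2 (sq_nonneg R),
        mul_le_mul_of_nonneg_right hR2S4 (mul_nonneg hF0 hU0),
        mul_nonneg (by positivity : (0:ℝ) ≤ S^4) (sq_nonneg (F - U))]
    exact ⟨le_of_sq_le_sq' hcert hnn, le_of_sq_le_sq' (by nlinarith [hcert]) hnn⟩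
  have hb3 : R*y3 ≤ S^3*((G+F)/2) ∧ -(R*y3) ≤ S^3*((G+F)/2) := by
    have hnn : (0:ℝ) ≤ S^3*((G+F)/2) := mul_nonneg (by positivity) (by linarith)
    have hR3S6 : R^3 ≤ S^6 := by
      have ha : R^3 ≤ S^3 := pow_le_pow_left₀ hR0 hRS 3
      have hb : (1:ℝ) ≤ S^3 := by nlinarith [hS1, hS0.le]
      nlinarith [ha, mul_le_mul_of_nonneg_left hb (by positivity : (0:ℝ) ≤ S^3)]
    have hcert : (R*y3)^2 ≤ (S^3*((G+F)/2))^2 := by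
      nlinarith [mul_le_mul_of_nonneg_left h3 (sq_nonneg R),
        mul_le_mul_of_nonneg_right hR3S6 (mul_nonneg hG0 hF0),
        mul_nonneg (by positivity : (0:ℝ) ≤ S^6) (sq_nonneg (G - F))]
    exact ⟨le_of_sq_le_sq' hcert hnn, le_of_sq_le_sq' (by nlinarith [hcert]) hnn⟩
  have ht1 : κ₁*y1/S ≤ κ₁*γ*((N+U)/2) := by
    rw [div_le_iff₀ hS0]
    nlinarith [mul_le_mul_of_nonneg_left hb1.1 hκ₁]
  have ht1' : -(κ₁*γ*((N+U)/2)) ≤ κ₁*y1/S := by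
    rw [le_div_iff₀ hS0]
    nlinarith [mul_le_mul_of_nonneg_left hb1.2 hκ₁]
  have ht2 : κ₁*R*y2/S^2 ≤ κ₁*((F+U)/2) := by
    rw [div_le_iff₀ (by positivity : (0:ℝ) < S^2)]
    nlinarith [mul_le_mul_of_nonneg_left hb2.1 hκ₁]
  have ht2' : -(κ₁*((F+U)/2)) ≤ κ₁*R*y2/S^2 := by
    rw [le_div_iff₀ (by positivity : (0:ℝ) < S^2)]
    nlinarith [mul_le_mul_of_nonneg_left hb2.2 hκ₁]
  have ht3 : κ₁*κ₂*R*y3/S^3 ≤ κ₁*κ₂*((G+F)/2) := by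
    rw [div_le_iff₀ (by positivity : (0:ℝ) < S^3)]
    nlinarith [mul_le_mul_of_nonneg_left hb3.1 (mul_nonneg hκ₁ hκ₂)]
  have ht3' : -(κ₁*κ₂*((G+F)/2)) ≤ κ₁*κ₂*R*y3/S^3 := by
    rw [le_div_iff₀ (by positivity : (0:ℝ) < S^3)]
    nlinarith [mul_le_mul_of_nonneg_left hb3.2 (mul_nonneg hκ₁ hκ₂)]
  rw [abs_le]
  constructor <;>
  nlinarith [ht1, ht1', ht2, ht2', ht3, ht3',
    mul_nonneg (mul_nonneg hκ₁ hγ) (by linarith : (0:ℝ) ≤ F+G),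
    mul_nonneg hκ₁ (by linarith : (0:ℝ) ≤ N+G),
    mul_nonneg (mul_nonneg hκ₁ hκ₂) (by linarith : (0:ℝ) ≤ N+U)]


lemma HasDerivWithinAt.mulconj {f g : ℝ → ℂ} {f' g' : ℂ} {s : Set ℝ} {t : ℝ}
    (hf : HasDerivWithinAt f f' s t) (hg : HasDerivWithinAt g g' s t) :
    HasDerivWithinAt (fun x => f x * (starRingEnd ℂ) (g x))
      (f' * (starRingEnd ℂ) (g t) + f t * (starRingEnd ℂ) g') s t := by
  have hgc : HasDerivWithinAt (fun x => (starRingEnd ℂ) (g x)) ((starRingEnd ℂ) g') s t :=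
    Complex.conjCLE.toContinuousLinearMap.hasFDerivAt.comp_hasDerivWithinAt t hg
  exact hf.mul hgc

lemma HasDerivWithinAt.cre {f : ℝ → ℂ} {f' : ℂ} {s : Set ℝ} {t : ℝ}
    (hf : HasDerivWithinAt f f' s t) :
    HasDerivWithinAt (fun x => (f x).re) f'.re s t :=
  Complex.reCLM.hasFDerivAt.comp_hasDerivWithinAt t hf


lemma UsqNorm_nonneg (nv : ℂ) (uv Ev Bv : Fin 3 → ℂ) : 0 ≤ UsqNorm nv uv Ev Bv := by
  have h0 := Complex.normSq_nonneg nv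
  have h1 : 0 ≤ ∑ i, Complex.normSq (uv i) := Finset.sum_nonneg fun i _ => Complex.normSq_nonneg _
  have h2 : 0 ≤ ∑ i, Complex.normSq (Ev i) := Finset.sum_nonneg fun i _ => Complex.normSq_nonneg _
  have h3 : 0 ≤ ∑ i, Complex.normSq (Bv i) := Finset.sum_nonneg fun i _ => Complex.normSq_nonneg _
  unfold UsqNorm
  linarith

lemma lyap_equiv (κ₁ κ₂ γ : ℝ) (hκ₁ : 0 ≤ κ₁) (hκ₂ : 0 ≤ κ₂) (hγ : 0 ≤ γ) (k : E3)
    (nv : ℂ) (uv Ev Bv : Fin 3 → ℂ) :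
    |lyapE κ₁ κ₂ γ k nv uv Ev Bv - UsqNorm nv uv Ev Bv|
      ≤ κ₁*(γ + 1 + κ₂)/2 * UsqNorm nv uv Ev Bv := by
  have hR0 : (0:ℝ) ≤ ‖k‖^2 := sq_nonneg _
  have hN0 : 0 ≤ Complex.normSq nv := Complex.normSq_nonneg _
  have hU0 : 0 ≤ (Complex.normSq (uv 0) + Complex.normSq (uv 1) + Complex.normSq (uv 2)) :=
    add_nonneg (add_nonneg (Complex.normSq_nonneg _) (Complex.normSq_nonneg _)) (Complex.normSq_nonneg _)
  have hF0 : 0 ≤ (Complex.normSq (Ev 0) + Complex.normSq (Ev 1) + Complex.normSq (Ev 2)) :=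
    add_nonneg (add_nonneg (Complex.normSq_nonneg _) (Complex.normSq_nonneg _)) (Complex.normSq_nonneg _)
  have hG0 : 0 ≤ (Complex.normSq (Bv 0) + Complex.normSq (Bv 1) + Complex.normSq (Bv 2)) :=
    add_nonneg (add_nonneg (Complex.normSq_nonneg _) (Complex.normSq_nonneg _)) (Complex.normSq_nonneg _)
  have hksq : ‖k‖^2 = k 0^2 + k 1^2 + k 2^2 := by
    rw [norm_sq_E3]; simp [Fin.sum_univ_three]
  have hdiff : lyapE κ₁ κ₂ γ k nv uv Ev Bv - UsqNorm nv uv Ev Bv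
      = κ₁*((hdotC (fun i => Complex.I * (γ:ℂ) * ((k i : ℝ):ℂ) * nv) uv).re)/(1 + ‖k‖^2) + κ₁*‖k‖^2*((hdotC Ev uv).re)/(1 + ‖k‖^2)^2 + κ₁*κ₂*‖k‖^2*((hdotC (fun i => -(Complex.I * crossC (vecC k) Bv i)) Ev).re)/(1 + ‖k‖^2)^3 := by
    simp only [lyapE]; ring
  have e1 : ((hdotC (fun i => Complex.I * (γ:ℂ) * ((k i : ℝ):ℂ) * nv) uv).re)^2 ≤ γ^2*‖k‖^2*(Complex.normSq nv)*((Complex.normSq (uv 0) + Complex.normSq (uv 1) + Complex.normSq (uv 2))) := by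
    have h1 := reSq_le_normSq (hdotC (fun i => Complex.I * (γ:ℂ) * ((k i : ℝ):ℂ) * nv) uv)
    have h2 := normSq_hdotC_le (fun i => Complex.I * (γ:ℂ) * ((k i : ℝ):ℂ) * nv) uv
    simp only [Fin.sum_univ_three] at h2
    have hw : Complex.normSq (Complex.I * (γ:ℂ) * ((k 0 : ℝ) : ℂ) * nv) + Complex.normSq (Complex.I * (γ:ℂ) * ((k 1 : ℝ) : ℂ) * nv) + Complex.normSq (Complex.I * (γ:ℂ) * ((k 2 : ℝ) : ℂ) * nv) = γ^2*(k 0^2 + k 1^2 + k 2^2)*Complex.normSq nv := by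
      simp only [Complex.normSq_mul, Complex.normSq_I, Complex.normSq_ofReal]; ring
    rw [hw, ← hksq] at h2
    nlinarith [h1, h2]
  have e2 : ((hdotC Ev uv).re)^2 ≤ ((Complex.normSq (Ev 0) + Complex.normSq (Ev 1) + Complex.normSq (Ev 2)))*((Complex.normSq (uv 0) + Complex.normSq (uv 1) + Complex.normSq (uv 2))) := by
    have h1 := reSq_le_normSq (hdotC Ev uv)
    have h2 := normSq_hdotC_le Ev uv
    simp only [Fin.sum_univ_three] at h2
    linarith
  have e3 : ((hdotC (fun i => -(Complex.I * crossC (vecC k) Bv i)) Ev).re)^2 ≤ ‖k‖^2*((Complex.normSq (Bv 0) + Complex.normSq (Bv 1) + Complex.normSq (Bv 2)))*((Complex.normSq (Ev 0) + Complex.normSq (Ev 1) + Complex.normSq (Ev 2))) := by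
    have h1 := reSq_le_normSq (hdotC (fun i => -(Complex.I * crossC (vecC k) Bv i)) Ev)
    have h2 := normSq_hdotC_le (fun i => -(Complex.I * crossC (vecC k) Bv i)) Ev
    simp only [Fin.sum_univ_three] at h2
    have hw : Complex.normSq (-(Complex.I * crossC (vecC k) Bv 0)) + Complex.normSq (-(Complex.I * crossC (vecC k) Bv 1)) + Complex.normSq (-(Complex.I * crossC (vecC k) Bv 2))
        = Complex.normSq (crossC (vecC k) Bv 0) + Complex.normSq (crossC (vecC k) Bv 1)
          + Complex.normSq (crossC (vecC k) Bv 2) := by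
      simp only [Complex.normSq_neg, Complex.normSq_mul, Complex.normSq_I]; ring
    rw [hw] at h2
    have hl := lagrange k Bv
    simp only [Fin.sum_univ_three] at hl
    have hd0 := Complex.normSq_nonneg (dotC (vecC k) Bv)
    nlinarith [h1, h2, hl, mul_le_mul_of_nonneg_right
      (by rw [hksq]; linarith : Complex.normSq (crossC (vecC k) Bv 0)
        + Complex.normSq (crossC (vecC k) Bv 1) + Complex.normSq (crossC (vecC k) Bv 2) ≤ ‖k‖^2*(Complex.normSq (Bv 0) + Complex.normSq (Bv 1) + Complex.normSq (Bv 2))) hF0]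
  have hUsq : UsqNorm nv uv Ev Bv = Complex.normSq nv + (Complex.normSq (uv 0) + Complex.normSq (uv 1) + Complex.normSq (uv 2)) + (Complex.normSq (Ev 0) + Complex.normSq (Ev 1) + Complex.normSq (Ev 2)) + (Complex.normSq (Bv 0) + Complex.normSq (Bv 1) + Complex.normSq (Bv 2)) := by
    simp only [UsqNorm, Fin.sum_univ_three]
  rw [hdiff, hUsq]
  exact equiv_core κ₁ κ₂ γ (‖k‖^2) (1 + ‖k‖^2) (Complex.normSq nv) ((Complex.normSq (uv 0) + Complex.normSq (uv 1) + Complex.normSq (uv 2))) ((Complex.normSq (Ev 0) + Complex.normSq (Ev 1) + Complex.normSq (Ev 2))) ((Complex.normSq (Bv 0) + Complex.normSq (Bv 1) + Complex.normSq (Bv 2))) _ _ _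
    hκ₁ hκ₂ hγ rfl hR0 hN0 hU0 hF0 hG0 e1 e2 e3


lemma main_deriv (γ β μ κ₁ : ℝ) (hγ : 0 < γ) (hβ : 0 < β) (hμ : 0 < μ) (hκ₁ : 0 < κ₁)
    (hA : κ₁ * (γ^2 + μ^2/2 + β + 4/β + μ^2/β + β^3/4) ≤ μ)
    (δ : ℝ) (hδ0 : 0 ≤ δ) (hδμ : δ ≤ μ) (hδN : δ ≤ κ₁*β^2) (hδF : δ ≤ κ₁*β/2) (hδG : δ ≤ κ₁*β/8)
    (k : E3) (n : ℝ → ℂ) (u E B : ℝ → Fin 3 → ℂ)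
    (sol : FourierNSMSol γ β μ k n u E B) (t : ℝ) (ht : 0 ≤ t) :
    ∃ D : ℝ, HasDerivWithinAt (fun τ => lyapE κ₁ (β/4) γ k (n τ) (u τ) (E τ) (B τ)) D (Set.Ici 0) t ∧
      D ≤ -(δ * ‖k‖^4 * UsqNorm (n t) (u t) (E t) (B t) / (1 + ‖k‖^2)^3) := by
  have hγ0 : γ ≠ 0 := ne_of_gt hγ
  have hβ0 : β ≠ 0 := ne_of_gt hβ
  have hn' := sol.hn t ht
  have hu0 := sol.hu t ht 0
  have hu1 := sol.hu t ht 1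
  have hu2 := sol.hu t ht 2
  have hE0 := sol.hE t ht 0
  have hE1 := sol.hE t ht 1
  have hE2 := sol.hE t ht 2
  have hB0 := sol.hB t ht 0
  have hB1 := sol.hB t ht 1
  have hB2 := sol.hB t ht 2
  obtain ⟨Φ, hΦ⟩ : ∃ Φ : ℝ → ℂ, Φ = fun τ => (n τ * (starRingEnd ℂ) (n τ) + (u τ 0 * (starRingEnd ℂ) (u τ 0) + u τ 1 * (starRingEnd ℂ) (u τ 1) + u τ 2 * (starRingEnd ℂ) (u τ 2)) + (E τ 0 * (starRingEnd ℂ) (E τ 0) + E τ 1 * (starRingEnd ℂ) (E τ 1) + E τ 2 * (starRingEnd ℂ) (E τ 2)) + (B τ 0 * (starRingEnd ℂ) (B τ 0) + B τ 1 * (starRingEnd ℂ) (B τ 1) + B τ 2 * (starRingEnd ℂ) (B τ 2))) + ((κ₁ / (1 + ‖k‖^2) : ℝ) : ℂ) * (Complex.I * (γ:ℂ) * ((k 0 : ℝ) : ℂ) * n τ * (starRingEnd ℂ) (u τ 0) + Complex.I * (γ:ℂ) * ((k 1 : ℝ) : ℂ) * n τ * (starRingEnd ℂ) (u τ 1) +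 Complex.I * (γ:ℂ) * ((k 2 : ℝ) : ℂ) * n τ * (starRingEnd ℂ) (u τ 2)) + ((κ₁ * ‖k‖^2 / (1 + ‖k‖^2)^2 : ℝ) : ℂ) * (E τ 0 * (starRingEnd ℂ) (u τ 0) + E τ 1 * (starRingEnd ℂ) (u τ 1) + E τ 2 * (starRingEnd ℂ) (u τ 2)) + ((κ₁ * (β/4) * ‖k‖^2 / (1 + ‖k‖^2)^3 : ℝ) : ℂ) * (-(Complex.I * (((k 1 : ℝ) : ℂ) * B τ 2 - ((k 2 : ℝ) : ℂ) * B τ 1)) * (starRingEnd ℂ) (E τ 0) + -(Complex.I * (((k 2 : ℝ) : ℂ) * B τ 0 - ((k 0 : ℝ) : ℂ) * B τ 2)) * (starRingEnd ℂ) (E τ 1) + -(Complex.I * (((k 0 : ℝ) : ℂ) * B τ 1 - ((k 1 : ℝ) : ℂ) * B τ 0)) * (starRingEnd ℂ) (E τ 2)) := ⟨_, rfl⟩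
  obtain ⟨dA, hdA⟩ : ∃ z : ℂ, z = ((-((γ:ℂ) * Complex.I * dotC (vecC k) (u t))) * (starRingEnd ℂ) (n t) + (n t) * (starRingEnd ℂ) (-((γ:ℂ) * Complex.I * dotC (vecC k) (u t)))) + (((-((γ:ℂ) * Complex.I * ((k 0 : ℝ) : ℂ) * n t) - (β:ℂ) * E t 0 - ((μ * ‖k‖^2 : ℝ):ℂ) * u t 0) * (starRingEnd ℂ) (u t 0) + (u t 0) * (starRingEnd ℂ) (-((γ:ℂ) * Complex.I * ((k 0 : ℝ) : ℂ) * n t) - (β:ℂ) * E t 0 - ((μ * ‖k‖^2 : ℝ):ℂ) * u t 0)) + ((-((γ:ℂ) * Complex.I * ((k 1 : ℝ) : ℂ) * n t) - (β:ℂ) * E t 1 - ((μ * ‖k‖^2 : ℝ):ℂ) * u t 1) * (starRingEnd ℂ) (u t 1) + (u t 1) * (starRingEnd ℂ) (-((γ:ℂ) * Complex.I * ((k 1 : ℝ) : ℂ) * n t) - (β:ℂ) * E t 1 - ((μ * ‖k‖^2 : ℝ):ℂ) * u t 1)) + ((-((γ:ℂ) * Complex.I * ((k 2 : ℝ) : ℂ)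 * n t) - (β:ℂ) * E t 2 - ((μ * ‖k‖^2 : ℝ):ℂ) * u t 2) * (starRingEnd ℂ) (u t 2) + (u t 2) * (starRingEnd ℂ) (-((γ:ℂ) * Complex.I * ((k 2 : ℝ) : ℂ) * n t) - (β:ℂ) * E t 2 - ((μ * ‖k‖^2 : ℝ):ℂ) * u t 2))) + (((Complex.I * crossC (vecC k) (B t) 0 + (β:ℂ) * u t 0) * (starRingEnd ℂ) (E t 0) + (E t 0) * (starRingEnd ℂ) (Complex.I * crossC (vecC k) (B t) 0 + (β:ℂ) * u t 0)) + ((Complex.I * crossC (vecC k) (B t) 1 + (β:ℂ) * u t 1) * (starRingEnd ℂ) (E t 1) + (E t 1) * (starRingEnd ℂ) (Complex.I * crossC (vecC k) (B t) 1 + (β:ℂ) * u t 1)) + ((Complex.I * crossC (vecC k) (B t) 2 + (β:ℂ) * u t 2) * (starRingEnd ℂ) (E t 2) + (E t 2) * (starRingEnd ℂ) (Complex.I * crossC (vecC k) (B t) 2 + (β:ℂ) * u t 2))) + (((-(Complex.I * crossC (vecC k) (E t) 0)) * (starRingEnd ℂ) (B t 0) + (B t 0) * (starRingEnd ℂ)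 (-(Complex.I * crossC (vecC k) (E t) 0))) + ((-(Complex.I * crossC (vecC k) (E t) 1)) * (starRingEnd ℂ) (B t 1) + (B t 1) * (starRingEnd ℂ) (-(Complex.I * crossC (vecC k) (E t) 1))) + ((-(Complex.I * crossC (vecC k) (E t) 2)) * (starRingEnd ℂ) (B t 2) + (B t 2) * (starRingEnd ℂ) (-(Complex.I * crossC (vecC k) (E t) 2)))) := ⟨_, rfl⟩
  obtain ⟨dT1, hdT1⟩ : ∃ z : ℂ, z = ((Complex.I * (γ:ℂ) * ((k 0 : ℝ) : ℂ) * (-((γ:ℂ) * Complex.I * dotC (vecC k) (u t)))) * (starRingEnd ℂ) (u t 0) + (Complex.I * (γ:ℂ) * ((k 0 : ℝ) : ℂ) * n t) * (starRingEnd ℂ) (-((γ:ℂ) * Complex.I * ((k 0 : ℝ) : ℂ) * n t) - (β:ℂ) * E t 0 - ((μ * ‖k‖^2 : ℝ):ℂ) * u t 0)) + ((Complex.I * (γ:ℂ) * ((k 1 : ℝ) : ℂ) * (-((γ:ℂ) * Complex.I * dotC (vecC k) (u t)))) * (starRingEnd ℂ) (u t 1) + (Complex.I * (γ:ℂ) *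 ((k 1 : ℝ) : ℂ) * n t) * (starRingEnd ℂ) (-((γ:ℂ) * Complex.I * ((k 1 : ℝ) : ℂ) * n t) - (β:ℂ) * E t 1 - ((μ * ‖k‖^2 : ℝ):ℂ) * u t 1)) + ((Complex.I * (γ:ℂ) * ((k 2 : ℝ) : ℂ) * (-((γ:ℂ) * Complex.I * dotC (vecC k) (u t)))) * (starRingEnd ℂ) (u t 2) + (Complex.I * (γ:ℂ) * ((k 2 : ℝ) : ℂ) * n t) * (starRingEnd ℂ) (-((γ:ℂ) * Complex.I * ((k 2 : ℝ) : ℂ) * n t) - (β:ℂ) * E t 2 - ((μ * ‖k‖^2 : ℝ):ℂ) * u t 2)) := ⟨_, rfl⟩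
  obtain ⟨dT2, hdT2⟩ : ∃ z : ℂ, z = ((Complex.I * crossC (vecC k) (B t) 0 + (β:ℂ) * u t 0) * (starRingEnd ℂ) (u t 0) + (E t 0) * (starRingEnd ℂ) (-((γ:ℂ) * Complex.I * ((k 0 : ℝ) : ℂ) * n t) - (β:ℂ) * E t 0 - ((μ * ‖k‖^2 : ℝ):ℂ) * u t 0)) + ((Complex.I * crossC (vecC k) (B t) 1 + (β:ℂ) * u t 1) * (starRingEnd ℂ) (u t 1) + (E t 1) * (starRingEnd ℂ) (-((γ:ℂ) * Complex.I * ((k 1 : ℝ) : ℂ) * n t) - (β:ℂ) * E t 1 - ((μ * ‖k‖^2 : ℝ):ℂ) * u t 1)) + ((Complex.I * crossC (vecC k) (B t) 2 + (β:ℂ) * u t 2) * (starRingEnd ℂ) (u t 2) + (E t 2) * (starRingEnd ℂ) (-((γ:ℂ) * Complex.I * ((k 2 : ℝ) : ℂ) * n t) - (β:ℂ) * E t 2 - ((μ * ‖k‖^2 : ℝ):ℂ) * u t 2)) := ⟨_, rfl⟩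
  obtain ⟨dT3, hdT3⟩ : ∃ z : ℂ, z = ((-(Complex.I * (((k 1 : ℝ) : ℂ) * (-(Complex.I * crossC (vecC k) (E t) 2)) - ((k 2 : ℝ) : ℂ) * (-(Complex.I * crossC (vecC k) (E t) 1))))) * (starRingEnd ℂ) (E t 0) + (-(Complex.I * (((k 1 : ℝ) : ℂ) * B t 2 - ((k 2 : ℝ) : ℂ) * B t 1))) * (starRingEnd ℂ) (Complex.I * crossC (vecC k) (B t) 0 + (β:ℂ) * u t 0)) + ((-(Complex.I * (((k 2 : ℝ) : ℂ) * (-(Complex.I * crossC (vecC k) (E t) 0)) - ((k 0 : ℝ) : ℂ) * (-(Complex.I * crossC (vecC k) (E t) 2))))) * (starRingEnd ℂ) (E t 1) + (-(Complex.I * (((k 2 : ℝ) : ℂ) * B t 0 - ((k 0 : ℝ) : ℂ) * B t 2))) * (starRingEnd ℂ) (Complex.I * crossC (vecC k) (B t) 1 + (β:ℂ) * u t 1)) + ((-(Complex.I * (((k 0 : ℝ) : ℂ) * (-(Complex.I * crossC (vecC k) (E t) 1)) - ((k 1 : ℝ) : ℂ) * (-(Complex.I * crossC (vecC k) (E t)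 0))))) * (starRingEnd ℂ) (E t 2) + (-(Complex.I * (((k 0 : ℝ) : ℂ) * B t 1 - ((k 1 : ℝ) : ℂ) * B t 0))) * (starRingEnd ℂ) (Complex.I * crossC (vecC k) (B t) 2 + (β:ℂ) * u t 2)) := ⟨_, rfl⟩
  have hPhi : HasDerivWithinAt Φ (dA + ((κ₁ / (1 + ‖k‖^2) : ℝ) : ℂ) * dT1 + ((κ₁ * ‖k‖^2 / (1 + ‖k‖^2)^2 : ℝ) : ℂ) * dT2 + ((κ₁ * (β/4) * ‖k‖^2 / (1 + ‖k‖^2)^3 : ℝ) : ℂ) * dT3) (Set.Ici 0) t := by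
    rw [hΦ, hdA, hdT1, hdT2, hdT3]
    exact (((((hn'.mulconj hn').add (((hu0.mulconj hu0).add (hu1.mulconj hu1)).add
        (hu2.mulconj hu2))).add (((hE0.mulconj hE0).add (hE1.mulconj hE1)).add
        (hE2.mulconj hE2))).add (((hB0.mulconj hB0).add (hB1.mulconj hB1)).add
        (hB2.mulconj hB2))).add
      (((((hn'.const_mul (Complex.I * (γ:ℂ) * ((k 0 : ℝ):ℂ))).mulconj hu0).add
        ((hn'.const_mul (Complex.I * (γ:ℂ) * ((k 1 : ℝ):ℂ))).mulconj hu1)).add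
        ((hn'.const_mul (Complex.I * (γ:ℂ) * ((k 2 : ℝ):ℂ))).mulconj hu2)).const_mul _)).add
      ((((hE0.mulconj hu0).add (hE1.mulconj hu1)).add (hE2.mulconj hu2)).const_mul _) |>.add
      (((((((hB2.const_mul (((k 1 : ℝ):ℂ))).sub (hB1.const_mul (((k 2 : ℝ):ℂ)))).const_mul
          Complex.I).neg.mulconj hE0).add
        (((((hB0.const_mul (((k 2 : ℝ):ℂ))).sub (hB2.const_mul (((k 0 : ℝ):ℂ)))).const_mul
          Complex.I).neg.mulconj hE1))).add
        (((((hB1.const_mul (((k 0 : ℝ):ℂ))).sub (hB0.const_mul (((k 1 : ℝ):ℂ)))).const_mul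
          Complex.I).neg.mulconj hE2))).const_mul _)
  have hEq : ∀ τ, lyapE κ₁ (β/4) γ k (n τ) (u τ) (E τ) (B τ) = (Φ τ).re := by
    intro τ
    rw [hΦ]
    simp only [lyapE, UsqNorm, hdotC, dotC, crossC, vecC, Fin.sum_univ_three,
      Matrix.cons_val_zero, Matrix.cons_val_one, Matrix.head_cons, Matrix.cons_val_two,
      Matrix.tail_cons, Complex.add_re, Complex.mul_conj, Complex.ofReal_re,
      Complex.re_ofReal_mul]
    ring
  have hfun : (fun τ => lyapE κ₁ (β/4) γ k (n τ) (u τ) (E τ) (B τ)) = fun τ => (Φ τ).re :=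
    funext hEq
  have hq : dotC (vecC k) (E t) = Complex.I * ((β/γ : ℝ):ℂ) * n t := by
    have h0 := sol.hdivE t ht
    have h1 : Complex.I * (Complex.I * dotC (vecC k) (E t))
        = Complex.I * (-(((β/γ : ℝ)):ℂ) * n t) := by rw [h0]
    rw [← mul_assoc, Complex.I_mul_I] at h1
    linear_combination -h1
  have hksq : ‖k‖^2 = k 0^2 + k 1^2 + k 2^2 := by
    rw [norm_sq_E3]; simp [Fin.sum_univ_three]
  have I0 : dA.re = -2*(μ*‖k‖^2)*(Complex.normSq (u t 0) + Complex.normSq (u t 1) + Complex.normSq (u t 2)) := by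
    rw [hdA]
    simp only [dotC, crossC, vecC, hdotC, Fin.sum_univ_three, Matrix.cons_val_zero, Matrix.cons_val_one, Matrix.head_cons, Matrix.cons_val_two, Matrix.tail_cons, map_add, map_sub, map_mul, map_neg, Complex.conj_ofReal, Complex.conj_I]
    simp only [Complex.normSq_apply, Complex.add_re, Complex.add_im, Complex.sub_re, Complex.sub_im, Complex.neg_re, Complex.neg_im, Complex.mul_re, Complex.mul_im, Complex.I_re, Complex.I_im, Complex.ofReal_re, Complex.ofReal_im, Complex.conj_re, Complex.conj_im]
    ring
  have I1 : dT1.re = γ^2*Complex.normSq (dotC (vecC k) (u t)) - γ^2*(k 0^2 + k 1^2 + k 2^2)*Complex.normSq (n t) + μ*‖k‖^2*γ*(-Complex.I * n t * (starRingEnd ℂ) (dotC (vecC k) (u t))).re + β*γ*(-Complex.I * n t * (starRingEnd ℂ) (dotC (vecC k) (E t))).re := by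
    rw [hdT1]
    simp only [dotC, crossC, vecC, hdotC, Fin.sum_univ_three, Matrix.cons_val_zero, Matrix.cons_val_one, Matrix.head_cons, Matrix.cons_val_two, Matrix.tail_cons, map_add, map_sub, map_mul, map_neg, Complex.conj_ofReal, Complex.conj_I]
    simp only [Complex.normSq_apply, Complex.add_re, Complex.add_im, Complex.sub_re, Complex.sub_im, Complex.neg_re, Complex.neg_im, Complex.mul_re, Complex.mul_im, Complex.I_re, Complex.I_im, Complex.ofReal_re, Complex.ofReal_im, Complex.conj_re, Complex.conj_im]
    ring
  have I2 : dT2.re = (Complex.I * hdotC (crossC (vecC k) (B t)) (u t)).re + β*(Complex.normSq (u t 0) + Complex.normSq (u t 1) + Complex.normSq (u t 2)) - β*(Complex.normSq (E t 0) + Complex.normSq (E t 1) + Complex.normSq (E t 2)) + γ*(Complex.I * (starRingEnd ℂ) (n t) * dotC (vecC k) (E t)).re - μ*‖k‖^2*(hdotC (E t) (u t)).re := by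
    rw [hdT2]
    simp only [dotC, crossC, vecC, hdotC, Fin.sum_univ_three, Matrix.cons_val_zero, Matrix.cons_val_one, Matrix.head_cons, Matrix.cons_val_two, Matrix.tail_cons, map_add, map_sub, map_mul, map_neg, Complex.conj_ofReal, Complex.conj_I]
    simp only [Complex.normSq_apply, Complex.add_re, Complex.add_im, Complex.sub_re, Complex.sub_im, Complex.neg_re, Complex.neg_im, Complex.mul_re, Complex.mul_im, Complex.I_re, Complex.I_im, Complex.ofReal_re, Complex.ofReal_im, Complex.conj_re, Complex.conj_im]
    ring
  have I3 : dT3.re = (k 0^2 + k 1^2 + k 2^2)*(Complex.normSq (E t 0) + Complex.normSq (E t 1) + Complex.normSq (E t 2)) - Complex.normSq (dotC (vecC k) (E t)) - (Complex.normSq (crossC (vecC k) (B t) 0) + Complex.normSq (crossC (vecC k) (B t) 1) + Complex.normSq (crossC (vecC k) (B t) 2)) - β*(Complex.I * hdotC (crossC (vecC k) (B t)) (u t)).re := by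
    rw [hdT3]
    simp only [dotC, crossC, vecC, hdotC, Fin.sum_univ_three, Matrix.cons_val_zero, Matrix.cons_val_one, Matrix.head_cons, Matrix.cons_val_two, Matrix.tail_cons, map_add, map_sub, map_mul, map_neg, Complex.conj_ofReal, Complex.conj_I]
    simp only [Complex.normSq_apply, Complex.add_re, Complex.add_im, Complex.sub_re, Complex.sub_im, Complex.neg_re, Complex.neg_im, Complex.mul_re, Complex.mul_im, Complex.I_re, Complex.I_im, Complex.ofReal_re, Complex.ofReal_im, Complex.conj_re, Complex.conj_im]
    ring
  have hXE : (-Complex.I * n t * (starRingEnd ℂ) (dotC (vecC k) (E t))).re = -((β/γ) * Complex.normSq (n t)) := by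
    rw [hq]
    have e : -Complex.I * n t * (starRingEnd ℂ) (Complex.I * ((β/γ : ℝ):ℂ) * n t)
        = -(((β/γ:ℝ):ℂ) * (n t * (starRingEnd ℂ) (n t))) := by
      simp only [map_mul, Complex.conj_I, Complex.conj_ofReal]
      linear_combination (((β/γ:ℝ):ℂ) * n t * (starRingEnd ℂ) (n t)) * Complex.I_sq
    rw [e, Complex.mul_conj]
    simp
  have hX3v : (Complex.I * (starRingEnd ℂ) (n t) * dotC (vecC k) (E t)).re = -((β/γ) * Complex.normSq (n t)) := by
    rw [hq]
    have e : Complex.I * (starRingEnd ℂ) (n t) * (Complex.I * ((β/γ : ℝ):ℂ) * n t)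
        = -(((β/γ:ℝ):ℂ) * (n t * (starRingEnd ℂ) (n t))) := by
      linear_combination (((β/γ:ℝ):ℂ) * n t * (starRingEnd ℂ) (n t)) * Complex.I_sq
    rw [e, Complex.mul_conj]
    simp
  have hNq : Complex.normSq (dotC (vecC k) (E t)) = (β/γ)^2 * Complex.normSq (n t) := by
    rw [hq]
    simp only [Complex.normSq_mul, Complex.normSq_I, Complex.normSq_ofReal]
    ring
  have hG2 : (Complex.normSq (crossC (vecC k) (B t) 0) + Complex.normSq (crossC (vecC k) (B t) 1) + Complex.normSq (crossC (vecC k) (B t) 2)) = ‖k‖^2 * (Complex.normSq (B t 0) + Complex.normSq (B t 1) + Complex.normSq (B t 2)) := by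
    have hl := lagrange k (B t)
    rw [sol.hdivB t ht] at hl
    simp only [Complex.normSq_zero, Fin.sum_univ_three] at hl
    rw [hksq]
    linarith [hl]
  have hN0 : 0 ≤ Complex.normSq (n t) := Complex.normSq_nonneg _
  have hU0 : 0 ≤ (Complex.normSq (u t 0) + Complex.normSq (u t 1) + Complex.normSq (u t 2)) :=
    add_nonneg (add_nonneg (Complex.normSq_nonneg _) (Complex.normSq_nonneg _)) (Complex.normSq_nonneg _)
  have hF0 : 0 ≤ (Complex.normSq (E t 0) + Complex.normSq (E t 1) + Complex.normSq (E t 2)) :=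
    add_nonneg (add_nonneg (Complex.normSq_nonneg _) (Complex.normSq_nonneg _)) (Complex.normSq_nonneg _)
  have hG0 : 0 ≤ (Complex.normSq (B t 0) + Complex.normSq (B t 1) + Complex.normSq (B t 2)) :=
    add_nonneg (add_nonneg (Complex.normSq_nonneg _) (Complex.normSq_nonneg _)) (Complex.normSq_nonneg _)
  have hP0 : 0 ≤ Complex.normSq (dotC (vecC k) (u t)) := Complex.normSq_nonneg _
  have hR0 : (0:ℝ) ≤ ‖k‖^2 := sq_nonneg _
  have hPU : Complex.normSq (dotC (vecC k) (u t)) ≤ ‖k‖^2 * (Complex.normSq (u t 0) + Complex.normSq (u t 1) + Complex.normSq (u t 2)) := by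
    have h1 : dotC (vecC k) (u t) = hdotC (u t) (vecC k) := by
      simp [dotC, hdotC, vecC, Fin.sum_univ_three, Complex.conj_ofReal]; ring
    rw [h1]
    have h2 := normSq_hdotC_le (u t) (vecC k)
    simp only [Fin.sum_univ_three, vecC, Complex.normSq_ofReal] at h2
    rw [hksq]; nlinarith [h2]
  have hXP : ((-Complex.I * n t * (starRingEnd ℂ) (dotC (vecC k) (u t))).re)^2 ≤ Complex.normSq (n t) * Complex.normSq (dotC (vecC k) (u t)) := by
    have h1 := reSq_le_normSq (-Complex.I * n t * (starRingEnd ℂ) (dotC (vecC k) (u t)))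
    simpa [Complex.normSq_mul, Complex.normSq_conj, Complex.normSq_neg, Complex.normSq_I] using h1
  have hWFU : ((hdotC (E t) (u t)).re)^2 ≤ (Complex.normSq (E t 0) + Complex.normSq (E t 1) + Complex.normSq (E t 2)) * (Complex.normSq (u t 0) + Complex.normSq (u t 1) + Complex.normSq (u t 2)) := by
    have h1 := reSq_le_normSq (hdotC (E t) (u t))
    have h2 := normSq_hdotC_le (E t) (u t)
    simp only [Fin.sum_univ_three] at h2
    linarith
  have hYGU : ((Complex.I * hdotC (crossC (vecC k) (B t)) (u t)).re)^2 ≤ (‖k‖^2 * (Complex.normSq (B t 0) + Complex.normSq (B t 1) + Complex.normSq (B t 2))) * (Complex.normSq (u t 0) + Complex.normSq (u t 1) + Complex.normSq (u t 2)) := by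
    have h1 := reSq_le_normSq (Complex.I * hdotC (crossC (vecC k) (B t)) (u t))
    rw [Complex.normSq_mul, Complex.normSq_I, one_mul] at h1
    have h2 := normSq_hdotC_le (crossC (vecC k) (B t)) (u t)
    simp only [Fin.sum_univ_three] at h2
    rw [hG2] at h2
    linarith
  have harith := arith_core γ β μ κ₁ δ (‖k‖^2) (1 + ‖k‖^2) (Complex.normSq (n t)) ((Complex.normSq (u t 0) + Complex.normSq (u t 1) + Complex.normSq (u t 2))) ((Complex.normSq (E t 0) + Complex.normSq (E t 1) + Complex.normSq (E t 2))) ((Complex.normSq (B t 0) + Complex.normSq (B t 1) + Complex.normSq (B t 2))) (Complex.normSq (dotC (vecC k) (u t))) ((-Complex.I * n t * (starRingEnd ℂ) (dotC (vecC k) (u t))).re) ((hdotC (E t) (u t)).re) ((Complex.I * hdotC (crossC (vecC k) (B t)) (u t)).re)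
    hγ hβ hμ hκ₁ hA hδ0 hδμ hδN hδF hδG rfl hR0 hN0 hU0 hF0 hG0 hP0 hPU hXP hWFU hYGU
  have hDre : (dA + ((κ₁ / (1 + ‖k‖^2) : ℝ) : ℂ) * dT1 + ((κ₁ * ‖k‖^2 / (1 + ‖k‖^2)^2 : ℝ) : ℂ) * dT2 + ((κ₁ * (β/4) * ‖k‖^2 / (1 + ‖k‖^2)^3 : ℝ) : ℂ) * dT3).re = -2*(μ*‖k‖^2)*(Complex.normSq (u t 0) + Complex.normSq (u t 1) + Complex.normSq (u t 2)) + κ₁/(1 + ‖k‖^2)*(γ^2*Complex.normSq (dotC (vecC k) (u t)) - (γ^2*‖k‖^2 + β^2)*Complex.normSq (n t) + μ*γ*‖k‖^2*(-Complex.I * n t * (starRingEnd ℂ) (dotC (vecC k) (u t))).re) + κ₁*‖k‖^2/(1 + ‖k‖^2)^2*((Complex.I * hdotC (crossC (vecC k) (B t)) (u t)).re + β*(Complex.normSq (u t 0) + Complex.normSq (u t 1) + Complex.normSq (u t 2)) - β*Complex.normSq (n t) - β*(Complex.normSq (E t 0) + Complex.normSq (E t 1) + Complex.normSq (E t 2))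 - μ*‖k‖^2*(hdotC (E t) (u t)).re) + κ₁*(β/4)*‖k‖^2/(1 + ‖k‖^2)^3*(‖k‖^2*(Complex.normSq (E t 0) + Complex.normSq (E t 1) + Complex.normSq (E t 2)) - (β/γ)^2*Complex.normSq (n t) - ‖k‖^2*(Complex.normSq (B t 0) + Complex.normSq (B t 1) + Complex.normSq (B t 2)) - β*(Complex.I * hdotC (crossC (vecC k) (B t)) (u t)).re) := by
    simp only [Complex.add_re, Complex.re_ofReal_mul]
    rw [I0, I1, I2, I3, hXE, hX3v, hNq, hG2, ← hksq]
    field_simp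
    ring
  have hUsq : UsqNorm (n t) (u t) (E t) (B t) = (Complex.normSq (n t) + (Complex.normSq (u t 0) + Complex.normSq (u t 1) + Complex.normSq (u t 2)) + (Complex.normSq (E t 0) + Complex.normSq (E t 1) + Complex.normSq (E t 2)) + (Complex.normSq (B t 0) + Complex.normSq (B t 1) + Complex.normSq (B t 2))) := by
    simp only [UsqNorm, Fin.sum_univ_three]; try ring
  refine ⟨(dA + ((κ₁ / (1 + ‖k‖^2) : ℝ) : ℂ) * dT1 + ((κ₁ * ‖k‖^2 / (1 + ‖k‖^2)^2 : ℝ) : ℂ) * dT2 + ((κ₁ * (β/4) * ‖k‖^2 / (1 + ‖k‖^2)^3 : ℝ) : ℂ) * dT3).re, by rw [hfun]; exact hPhi.cre, ?_⟩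
  calc (dA + ((κ₁ / (1 + ‖k‖^2) : ℝ) : ℂ) * dT1 + ((κ₁ * ‖k‖^2 / (1 + ‖k‖^2)^2 : ℝ) : ℂ) * dT2 + ((κ₁ * (β/4) * ‖k‖^2 / (1 + ‖k‖^2)^3 : ℝ) : ℂ) * dT3).re
      = -2*(μ*‖k‖^2)*(Complex.normSq (u t 0) + Complex.normSq (u t 1) + Complex.normSq (u t 2)) + κ₁/(1 + ‖k‖^2)*(γ^2*Complex.normSq (dotC (vecC k) (u t)) - (γ^2*‖k‖^2 + β^2)*Complex.normSq (n t) + μ*γ*‖k‖^2*(-Complex.I * n t * (starRingEnd ℂ) (dotC (vecC k) (u t))).re) + κ₁*‖k‖^2/(1 + ‖k‖^2)^2*((Complex.I * hdotC (crossC (vecC k) (B t)) (u t)).re + β*(Complex.normSq (u t 0) + Complex.normSq (u t 1) + Complex.normSq (u t 2)) - β*Complex.normSq (n t) - β*(Complex.normSq (E t 0) + Complex.normSq (E t 1) + Complex.normSq (E t 2)) - μ*‖k‖^2*(hdotC (E t) (u t)).re) + κ₁*(β/4)*‖k‖^2/(1 + ‖k‖^2)^3*(‖k‖^2*(Complex.normSq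 (E t 0) + Complex.normSq (E t 1) + Complex.normSq (E t 2)) - (β/γ)^2*Complex.normSq (n t) - ‖k‖^2*(Complex.normSq (B t 0) + Complex.normSq (B t 1) + Complex.normSq (B t 2)) - β*(Complex.I * hdotC (crossC (vecC k) (B t)) (u t)).re) := hDre
    _ ≤ -(δ * (‖k‖^2)^2 * ((Complex.normSq (n t) + (Complex.normSq (u t 0) + Complex.normSq (u t 1) + Complex.normSq (u t 2)) + (Complex.normSq (E t 0) + Complex.normSq (E t 1) + Complex.normSq (E t 2)) + (Complex.normSq (B t 0) + Complex.normSq (B t 1) + Complex.normSq (B t 2)))) / (1 + ‖k‖^2)^3) := harith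
    _ = -(δ * ‖k‖^4 * UsqNorm (n t) (u t) (E t) (B t) / (1 + ‖k‖^2)^3) := by rw [hUsq]; ring

end Aux

/-- there are `C, c > 0` depending only on `γ, β, μ` such that
every solution of the Fourier-transformed linearized Navier–Stokes–Maxwell
system at frequency `k` satisfies
`|Û(t,k)|² ≤ C exp(−c|k|⁴t/(1+|k|²)³)|Û(0,k)|²` for all `t ≥ 0`. -/
theorem stmt2 (γ β μ : ℝ) (hγ : 0 < γ) (hβ : 0 < β) (hμ : 0 < μ) :
    ∃ C : ℝ, 0 < C ∧ ∃ c : ℝ, 0 < c ∧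
    ∀ (k : E3) (n : ℝ → ℂ) (u E B : ℝ → Fin 3 → ℂ),
      FourierNSMSol γ β μ k n u E B →
      ∀ t : ℝ, 0 ≤ t →
        UsqNorm (n t) (u t) (E t) (B t)
          ≤ C * Real.exp (-(c * ‖k‖^4 * t / (1 + ‖k‖^2)^3))
            * UsqNorm (n 0) (u 0) (E 0) (B 0) := by
  have hC1p : (0:ℝ) < γ^2 + μ^2/2 + β + 4/β + μ^2/β + β^3/4 := by positivity
  have hC2p : (0:ℝ) < γ + 1 + β/4 := by positivity
  set κ₁ : ℝ := min (μ / (γ^2 + μ^2/2 + β + 4/β + μ^2/β + β^3/4)) (1/(2*(γ + 1 + β/4))) with hκ₁def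
  have hκ₁p : 0 < κ₁ := lt_min (by positivity) (by positivity)
  have hminp : (0:ℝ) < min 1 β := lt_min one_pos hβ
  set δ : ℝ := min μ (κ₁*β*(min 1 β)/8) with hδdef
  have hδp : 0 < δ := lt_min hμ (by positivity)
  refine ⟨2, by norm_num, 4/5*δ, by positivity, ?_⟩
  intro k n u E B sol t ht
  have hA : κ₁ * (γ^2 + μ^2/2 + β + 4/β + μ^2/β + β^3/4) ≤ μ := by
    have h1 : κ₁ ≤ μ / (γ^2 + μ^2/2 + β + 4/β + μ^2/β + β^3/4) := min_le_left _ _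
    rw [le_div_iff₀ hC1p] at h1
    exact h1
  have h14 : κ₁*(γ + 1 + β/4)/2 ≤ 1/4 := by
    have h1 : κ₁ ≤ 1/(2*(γ + 1 + β/4)) := min_le_right _ _
    rw [le_div_iff₀ (by positivity)] at h1
    nlinarith [h1]
  have hδμ : δ ≤ μ := min_le_left _ _
  have hδbase : δ ≤ κ₁*β*(min 1 β)/8 := min_le_right _ _
  have hδN : δ ≤ κ₁*β^2 := by
    nlinarith [hδbase, mul_le_mul_of_nonneg_left (min_le_right (1:ℝ) β)
      (by positivity : (0:ℝ) ≤ κ₁*β/8), mul_pos hκ₁p (mul_pos hβ hβ)]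
  have hδF : δ ≤ κ₁*β/2 := by
    nlinarith [hδbase, mul_le_mul_of_nonneg_left (min_le_left (1:ℝ) β)
      (by positivity : (0:ℝ) ≤ κ₁*β/8), mul_pos hκ₁p hβ]
  have hδG : δ ≤ κ₁*β/8 := by
    nlinarith [hδbase, mul_le_mul_of_nonneg_left (min_le_left (1:ℝ) β)
      (by positivity : (0:ℝ) ≤ κ₁*β/8)]
  have key : ∀ x : ℝ, 0 ≤ x → ∃ D : ℝ,
      HasDerivWithinAt (fun τ => lyapE κ₁ (β/4) γ k (n τ) (u τ) (E τ) (B τ)) D (Set.Ici 0) x ∧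
      D ≤ -(δ * ‖k‖^4 * UsqNorm (n x) (u x) (E x) (B x) / (1 + ‖k‖^2)^3) :=
    fun x hx => main_deriv γ β μ κ₁ hγ hβ hμ hκ₁p hA δ hδp.le hδμ hδN hδF hδG k n u E B sol x hx
  have equ : ∀ τ : ℝ,
      3/4 * UsqNorm (n τ) (u τ) (E τ) (B τ) ≤ lyapE κ₁ (β/4) γ k (n τ) (u τ) (E τ) (B τ)
      ∧ lyapE κ₁ (β/4) γ k (n τ) (u τ) (E τ) (B τ) ≤ 5/4 * UsqNorm (n τ) (u τ) (E τ) (B τ) := by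
    intro τ
    have h := lyap_equiv κ₁ (β/4) γ hκ₁p.le (by positivity) hγ.le k (n τ) (u τ) (E τ) (B τ)
    have hq0 := UsqNorm_nonneg (n τ) (u τ) (E τ) (B τ)
    rw [abs_le] at h
    have hh := mul_le_mul_of_nonneg_right h14 hq0
    constructor <;> nlinarith [h.1, h.2, hh]
  set a : ℝ := 4/5*δ*‖k‖^4/(1 + ‖k‖^2)^3 with ha
  have ha0 : 0 ≤ a := by rw [ha]; positivity
  obtain ⟨g, hgdef⟩ : ∃ g : ℝ → ℝ,
      g = fun τ => lyapE κ₁ (β/4) γ k (n τ) (u τ) (E τ) (B τ) * Real.exp (a*τ) := ⟨_, rfl⟩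
  have hanti : AntitoneOn g (Set.Ici 0) := by
    apply antitoneOn_of_deriv_nonpos (convex_Ici 0)
    · rw [hgdef]
      intro x hx
      obtain ⟨D, hD, -⟩ := key x hx
      exact (hD.continuousWithinAt.mul
        ((Real.continuous_exp.comp (continuous_const.mul continuous_id)).continuousWithinAt))
    · rw [hgdef]
      intro x hx
      rw [interior_Ici] at hx
      obtain ⟨D, hD, -⟩ := key x (le_of_lt hx)
      have h1 : HasDerivAt (fun τ => lyapE κ₁ (β/4) γ k (n τ) (u τ) (E τ) (B τ)) D x :=
        hD.hasDerivAt (Ici_mem_nhds hx)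
      exact ((h1.mul (((hasDerivAt_id x).const_mul a).exp)).differentiableAt).differentiableWithinAt
    · intro x hx
      rw [interior_Ici] at hx
      obtain ⟨D, hD, hDle⟩ := key x (le_of_lt hx)
      have h1 : HasDerivAt (fun τ => lyapE κ₁ (β/4) γ k (n τ) (u τ) (E τ) (B τ)) D x :=
        hD.hasDerivAt (Ici_mem_nhds hx)
      have h3 : HasDerivAt g
          (D * Real.exp (a*x)
            + lyapE κ₁ (β/4) γ k (n x) (u x) (E x) (B x) * (Real.exp (a*x) * (a*1))) x := by
        rw [hgdef]
        exact h1.mul (((hasDerivAt_id x).const_mul a).exp)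
      rw [h3.deriv]
      have hLx := (equ x).2
      have hQx0 := UsqNorm_nonneg (n x) (u x) (E x) (B x)
      have hexp : (0:ℝ) < Real.exp (a*x) := Real.exp_pos _
      have hsum : D + a * lyapE κ₁ (β/4) γ k (n x) (u x) (E x) (B x) ≤ 0 := by
        have h5 : a * lyapE κ₁ (β/4) γ k (n x) (u x) (E x) (B x)
            ≤ a * (5/4 * UsqNorm (n x) (u x) (E x) (B x)) :=
          mul_le_mul_of_nonneg_left hLx ha0
        have h6 : a * (5/4 * UsqNorm (n x) (u x) (E x) (B x))
            = δ * ‖k‖^4 * UsqNorm (n x) (u x) (E x) (B x) / (1 + ‖k‖^2)^3 := by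
          rw [ha]; ring
        linarith [hDle, h5, h6.le]
      have h7 := mul_le_mul_of_nonneg_right hsum hexp.le
      nlinarith [h7]
  have hmono : g t ≤ g 0 := hanti Set.self_mem_Ici (Set.mem_Ici.mpr ht) ht
  have hmono' : lyapE κ₁ (β/4) γ k (n t) (u t) (E t) (B t) * Real.exp (a*t)
      ≤ lyapE κ₁ (β/4) γ k (n 0) (u 0) (E 0) (B 0) * Real.exp (a*0) := by
    rw [hgdef] at hmono; exact hmono
  rw [mul_zero, Real.exp_zero, mul_one] at hmono'
  have hexp : (0:ℝ) < Real.exp (a*t) := Real.exp_pos _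
  have hLt : lyapE κ₁ (β/4) γ k (n t) (u t) (E t) (B t)
      ≤ lyapE κ₁ (β/4) γ k (n 0) (u 0) (E 0) (B 0) * Real.exp (-(a*t)) := by
    rw [Real.exp_neg, ← div_eq_mul_inv, le_div_iff₀ hexp]
    exact hmono'
  have hQt := (equ t).1
  have hL0 := (equ 0).2
  have hQ00 := UsqNorm_nonneg (n 0) (u 0) (E 0) (B 0)
  have hexpeq : -(4/5*δ * ‖k‖^4 * t / (1 + ‖k‖^2)^3) = -(a*t) := by rw [ha]; ring
  rw [hexpeq]
  nlinarith [hQt, hLt, mul_le_mul_of_nonneg_right hL0 (Real.exp_nonneg (-(a*t))),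
    mul_nonneg hQ00 (Real.exp_nonneg (-(a*t)))]

end
end

section
/- Fix a > 0 and r > 0 and let g(z) = z³ + a r z² + (r+1) z + a r². Then g has at least one real root, and every real root σ of g satisfies −ar < σ < −ar²/(r+1). -/
/-- for `a > 0`, `r > 0`, the cubic `g(z) = z³ + a r z² + (r+1) z + a r²`
has at least one real root, and every real root `σ` satisfies
`-ar < σ < -ar²/(r+1)`. -/
theorem stmt9 (a r : ℝ) (ha : 0 < a) (hr : 0 < r) :
    (∃ σ : ℝ, σ^3 + a*r*σ^2 + (r+1)*σ + a*r^2 = 0) ∧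
    (∀ σ : ℝ, σ^3 + a*r*σ^2 + (r+1)*σ + a*r^2 = 0 →
      -(a*r) < σ ∧ σ < -(a*r^2)/(r+1)) := by
  have hr1 : (0:ℝ) < r + 1 := by linarith
  constructor
  · -- existence via IVT on [-(a*r), 0]
    have hcont : Continuous fun σ : ℝ => σ^3 + a*r*σ^2 + (r+1)*σ + a*r^2 := by
      continuity
    have hle : -(a*r) ≤ (0:ℝ) := by nlinarith
    have hmem : (0:ℝ) ∈ Set.Icc ((-(a*r))^3 + a*r*(-(a*r))^2 + (r+1)*(-(a*r)) + a*r^2)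
        ((0:ℝ)^3 + a*r*(0:ℝ)^2 + (r+1)*(0:ℝ) + a*r^2) := by
      constructor
      · nlinarith
      · nlinarith
    obtain ⟨σ, _, hσ⟩ := intermediate_value_Icc hle hcont.continuousOn hmem
    exact ⟨σ, hσ⟩
  · intro σ hσ
    constructor
    · by_contra h
      push_neg at h
      -- σ ≤ -(a*r): then g(σ) = σ²(σ+ar) + (r+1)σ + ar² ≤ -ar < 0
      nlinarith [sq_nonneg σ, mul_nonneg (sq_nonneg σ) (by linarith : (0:ℝ) ≤ -(σ + a*r))]
    · by_contra h
      push_neg at h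
      rw [div_le_iff₀ hr1] at h
      -- -(a*r^2) ≤ σ*(r+1), i.e. (r+1)σ + ar² ≥ 0, and σ + ar > 0
      have hσar : 0 < σ + a*r := by nlinarith
      have h1 : 0 ≤ (r+1)*σ + a*r^2 := by nlinarith
      have h2 : 0 ≤ σ^2 * (σ + a*r) := mul_nonneg (sq_nonneg σ) hσar.le
      have heq : σ^2 * (σ + a*r) + ((r+1)*σ + a*r^2) = 0 := by nlinarith
      have h3 : σ^2 * (σ + a*r) = 0 := by linarith
      have h4 : σ = 0 := by
        rcases mul_eq_zero.1 h3 with h | h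
        · exact pow_eq_zero_iff (by norm_num) |>.1 h
        · linarith
      rw [h4] at hσ
      nlinarith
end

section
/- Fix a > 0 and r > 0 and let g(z) = z³ + a r z² + (r+1) z + a r². If a < 3√3/2 and r > 1/a, then g has at least one real root σ with −ar < σ < −ar + 1/(ar). -/
/-- if `0 < a < 3√3/2` and `r > 1/a`, the cubic
`g(z) = z³ + a r z² + (r+1) z + a r²` has a real root `σ` with
`-ar < σ < -ar + 1/(ar)`. -/
theorem stmt10 (a r : ℝ) (ha : 0 < a) (ha' : a < 3 * Real.sqrt 3 / 2)
    (hr : 1 / a < r) :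
    ∃ σ : ℝ, σ^3 + a*r*σ^2 + (r+1)*σ + a*r^2 = 0 ∧
      -(a*r) < σ ∧ σ < -(a*r) + 1/(a*r) := by
  have hr0 : 0 < r := lt_trans (by positivity) hr
  have har : 0 < a * r := mul_pos ha hr0
  set f : ℝ → ℝ := fun z => z^3 + a*r*z^2 + (r+1)*z + a*r^2 with hf
  set t : ℝ := -(a*r) with ht
  set ε : ℝ := 1/(a*r) with hε
  have hεpos : 0 < ε := by positivity
  have hlt : t < t + ε := by linarith
  have hft : f t = -(a*r) := by
    simp only [hf, ht]; ring
  have hA : a^2 < 27/4 := by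
    nlinarith [Real.sq_sqrt (show (0:ℝ) ≤ 3 by norm_num), Real.sqrt_nonneg 3]
  have hQ : (0:ℝ) ≤ 27*r^3 - 27*r^2 + 4 := by
    nlinarith [sq_nonneg (3*r-2), hr0]
  have hnum : 0 < a^2*r^3 - a^2*r^2 + 1 := by
    nlinarith [mul_nonneg (sq_nonneg a) hQ]
  have hfte : f (t + ε) = (a^2*r^3 - a^2*r^2 + 1)/(a^3*r^3) := by
    simp only [hf, ht, hε]
    field_simp
    ring
  have hftpos : 0 < f (t + ε) := by
    rw [hfte]; positivity
  have hcont : ContinuousOn f (Set.Icc t (t + ε)) := by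
    apply Continuous.continuousOn; fun_prop
  have h0 : (0:ℝ) ∈ Set.Ioo (f t) (f (t + ε)) := by
    constructor
    · rw [hft]; linarith
    · exact hftpos
  obtain ⟨σ, hσmem, hσeq⟩ := intermediate_value_Ioo (le_of_lt hlt) hcont h0
  exact ⟨σ, hσeq, hσmem.1, hσmem.2⟩
end

section
/- Fix a with 0 < a ≤ √2/4. Then for every r > 0 the cubic g(z) = z³ + a r z² + (r+1) z + a r² has exactly one real root σ(r), it satisfies g′(σ(r)) > 0, and the function r ↦ σ(r) is strictly decreasing on (0,∞), i.e. dσ/dr = −(aσ² + σ + 2ar)/g′(σ) < 0 for all r > 0. -/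
lemma aux_asq {a : ℝ} (ha : 0 < a) (ha' : a ≤ Real.sqrt 2 / 4) : a^2 ≤ 1/8 := by
  have h2 : (Real.sqrt 2)^2 = 2 := Real.sq_sqrt (by norm_num)
  have h0 : (0:ℝ) ≤ Real.sqrt 2 / 4 := by positivity
  nlinarith [ha.le]

lemma aux_neg {a r z : ℝ} (ha : 0 < a) (hr : 0 < r)
    (h : z^3 + a*r*z^2 + (r+1)*z + a*r^2 = 0) : z < 0 := by
  by_contra hz
  push_neg at hz
  nlinarith [mul_pos ha (mul_pos hr hr), mul_nonneg (mul_nonneg ha.le hr.le) (sq_nonneg z),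
    pow_nonneg hz 3, mul_nonneg (by linarith : (0:ℝ) ≤ r+1) hz]

lemma aux_uniq {a r z1 z2 : ℝ} (ha : 0 < a) (hA : a^2 ≤ 1/8) (hr : 0 < r)
    (h1 : z1^3 + a*r*z1^2 + (r+1)*z1 + a*r^2 = 0)
    (h2 : z2^3 + a*r*z2^2 + (r+1)*z2 + a*r^2 = 0) : z1 = z2 := by
  by_contra hne
  have hsub : (z1 - z2) * (z1^2 + z1*z2 + z2^2 + a*r*(z1+z2) + (r+1)) = 0 := by
    linear_combination h1 - h2
  have hE : z1^2 + z1*z2 + z2^2 + a*r*(z1+z2) + (r+1) = 0 := by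
    rcases mul_eq_zero.1 hsub with h | h
    · exact absurd (sub_eq_zero.1 h) hne
    · exact h
  set z3 : ℝ := -(a*r) - z1 - z2 with hz3
  have hs : z1 + z2 + z3 = -(a*r) := by rw [hz3]; ring
  have hq : z1*z2 + z1*z3 + z2*z3 = r + 1 := by rw [hz3]; linear_combination -hE
  have hp : z1*z2*z3 = -(a*r^2) := by rw [hz3]; linear_combination h1 - z1 * hE
  have hdisc : ((z1-z2)*(z1-z3)*(z2-z3))^2 =
      (z1+z2+z3)^2*(z1*z2+z1*z3+z2*z3)^2 - 4*(z1*z2+z1*z3+z2*z3)^3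
      - 4*(z1+z2+z3)^3*(z1*z2*z3) + 18*(z1+z2+z3)*(z1*z2+z1*z3+z2*z3)*(z1*z2*z3)
      - 27*(z1*z2*z3)^2 := by ring
  rw [hs, hq, hp] at hdisc
  have hge : 0 ≤ ((z1-z2)*(z1-z3)*(z2-z3))^2 := sq_nonneg _
  rw [hdisc] at hge
  nlinarith [sq_nonneg (a^2), mul_pos hr hr, mul_pos (mul_pos hr hr) hr,
    mul_pos (mul_pos (mul_pos hr hr) hr) hr,
    mul_pos (mul_pos (mul_pos (mul_pos hr hr) hr) hr) hr,
    mul_nonneg (mul_nonneg (sq_nonneg (a^2)) hr.le) (mul_nonneg (mul_nonneg hr.le hr.le) (mul_nonneg hr.le hr.le)),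
    mul_nonneg (sq_nonneg a) (mul_pos (mul_pos hr hr) (mul_pos hr hr)).le]

lemma aux_exists {a r : ℝ} (ha : 0 < a) (hr : 0 < r) :
    ∃ z : ℝ, z^3 + a*r*z^2 + (r+1)*z + a*r^2 = 0 := by
  set f : ℝ → ℝ := fun z => z^3 + a*r*z^2 + (r+1)*z + a*r^2 with hf
  set B : ℝ := 1 + a*r + (r+1) + a*r^2 with hB
  have hB1 : 1 ≤ B := by nlinarith [mul_pos ha hr, mul_pos ha (mul_pos hr hr)]
  have hcont : ContinuousOn f (Set.Icc (-B) 0) := by fun_prop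
  have hmem : (0:ℝ) ∈ Set.Icc (f (-B)) (f 0) := by
    constructor
    · show f (-B) ≤ 0
      have har : a*r < B := by nlinarith [mul_pos ha (mul_pos hr hr)]
      have har2 : a*r^2 < B := by nlinarith [mul_pos ha hr]
      show (-B)^3 + a*r*(-B)^2 + (r+1)*(-B) + a*r^2 ≤ 0
      nlinarith [mul_pos (mul_pos (show (0:ℝ) < B by linarith) (show (0:ℝ) < B by linarith))
        (show (0:ℝ) < B - a*r by linarith), mul_pos hr (show (0:ℝ) < B by linarith)]
    · show 0 ≤ f 0
      show 0 ≤ (0:ℝ)^3 + a*r*(0:ℝ)^2 + (r+1)*(0:ℝ) + a*r^2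
      nlinarith [mul_pos ha (mul_pos hr hr)]
  obtain ⟨z, _, hz⟩ := intermediate_value_Icc (by linarith : -B ≤ (0:ℝ)) hcont hmem
  exact ⟨z, hz⟩

lemma aux_gp {a r z : ℝ} (ha : 0 < a) (hA : a^2 ≤ 1/8) (hr : 0 < r)
    (h : z^3 + a*r*z^2 + (r+1)*z + a*r^2 = 0) :
    0 < 3*z^2 + 2*a*r*z + (r+1) := by
  have hzneg : z < 0 := aux_neg ha hr h
  have hd : HasDerivAt (fun w : ℝ => w^3 + a*r*w^2 + (r+1)*w + a*r^2)
      (3*z^2 + 2*a*r*z + (r+1)) z := by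
    have h1 := hasDerivAt_pow 3 z
    have h2 := (hasDerivAt_pow 2 z).const_mul (a*r)
    have h3 := (hasDerivAt_id z).const_mul (r+1)
    have := ((h1.add h2).add h3).add_const (a*r^2)
    exact this.congr_deriv (by norm_num; ring)
  have hge : 0 ≤ 3*z^2 + 2*a*r*z + (r+1) := by
    by_contra hlt
    push_neg at hlt
    have hslope := hasDerivAt_iff_tendsto_slope.1 hd
    have hmem : slope (fun w : ℝ => w^3 + a*r*w^2 + (r+1)*w + a*r^2) z ⁻¹' (Set.Iio 0)
        ∈ nhdsWithin z {z}ᶜ := hslope (Iio_mem_nhds hlt)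
    have hsub : nhdsWithin z (Set.Ioi z) ≤ nhdsWithin z {z}ᶜ :=
      nhdsWithin_mono z (fun y hy => Set.mem_compl_singleton_iff.2 (ne_of_gt hy))
    have hev : ∀ᶠ y in nhdsWithin z (Set.Ioi z),
        slope (fun w : ℝ => w^3 + a*r*w^2 + (r+1)*w + a*r^2) z y < 0 ∧ z < y := by
      filter_upwards [hsub hmem, self_mem_nhdsWithin] with y hy1 hy2
      exact ⟨hy1, hy2⟩
    obtain ⟨y, hy1, hy2⟩ := hev.exists
    rw [slope_def_field] at hy1
    have hpos : 0 < y - z := by linarith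
    have hfy : y^3 + a*r*y^2 + (r+1)*y + a*r^2 < 0 := by
      have := (div_lt_iff₀ hpos).1 hy1
      rw [h] at this
      linarith
    have hy0 : y < 0 := by
      by_contra hy0
      push_neg at hy0
      nlinarith [mul_pos ha (mul_pos hr hr), mul_nonneg (mul_nonneg ha.le hr.le) (sq_nonneg y),
        pow_nonneg hy0 3, mul_nonneg (by linarith : (0:ℝ) ≤ r+1) hy0]
    have hcont : ContinuousOn (fun w : ℝ => w^3 + a*r*w^2 + (r+1)*w + a*r^2)
        (Set.Icc y 1) := by fun_prop
    have hmem1 : (0:ℝ) ∈ Set.Icc (y^3 + a*r*y^2 + (r+1)*y + a*r^2)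
        ((1:ℝ)^3 + a*r*(1:ℝ)^2 + (r+1)*(1:ℝ) + a*r^2) := by
      constructor
      · linarith
      · nlinarith [mul_pos ha hr, mul_pos ha (mul_pos hr hr)]
    obtain ⟨w, hw1, hw2⟩ := intermediate_value_Icc (by linarith : y ≤ (1:ℝ)) hcont hmem1
    have heq := aux_uniq ha hA hr h hw2
    have : z < w := lt_of_lt_of_le hy2 hw1.1
    rw [heq] at this
    exact lt_irrefl w this
  rcases lt_or_eq_of_le hge with hgt | heq
  · exact hgt
  exfalso
  have h' : 3*z^2 + 2*a*r*z + (r+1) = 0 := heq.symm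
  have hu : (-(a*r)-2*z)^3 + a*r*(-(a*r)-2*z)^2 + (r+1)*(-(a*r)-2*z) + a*r^2 = 0 := by
    linear_combination h + ((-(a*r)-2*z) - z) * h'
  have heq2 : z = -(a*r) - 2*z := aux_uniq ha hA hr h hu
  have har : a*r = -3*z := by linarith
  have hzne : z ≠ 0 := ne_of_lt hzneg
  have hr1 : r + 1 = 3*z^2 := by
    linear_combination h' - 2*z*har
  have har2 : a*r^2 = -z^3 := by
    linear_combination h - z^2*har - z*hr1
  have h3 : 3*z*r = z^3 := by linear_combination r*har - har2
  have h3' : z*(3*r) = z*z^2 := by linear_combination h3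
  have hrz : 3*r = z^2 := mul_left_cancel₀ hzne h3'
  have hz2 : z^2 = 3/8 := by linarith
  have hrv : r = 1/8 := by linarith
  have hav : a = -24*z := by
    rw [hrv] at har
    linarith
  have ha2 : a^2 = 216 := by
    have : a^2 = 576*z^2 := by rw [hav]; ring
    rw [this, hz2]; norm_num
  linarith

noncomputable def rho (a t : ℝ) : ℝ :=
  (-(a*t^2+t) + Real.sqrt ((a*t^2+t)^2 - 4*a*(t^3+t)))/(2*a)

lemma aux_D_pos {a t : ℝ} (ha : 0 < a) (ht : t < 0) :
    0 < (a*t^2+t)^2 - 4*a*(t^3+t) := by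
  nlinarith [sq_nonneg (a*t^2+t),
    mul_pos ha (mul_pos (neg_pos.2 ht) (by nlinarith [sq_nonneg t] : (0:ℝ) < t^2+1))]

lemma aux_pos_t {a r z : ℝ} (ha : 0 < a) (hr : 0 < r)
    (h : z^3 + a*r*z^2 + (r+1)*z + a*r^2 = 0) : 0 < a*z^2 + z + 2*a*r := by
  have hz : z < 0 := aux_neg ha hr h
  have h1 : 0 < a*r + a*z^2 + z := by
    nlinarith [mul_pos (neg_pos.2 hz) (by nlinarith [sq_nonneg z] : (0:ℝ) < z^2+1)]
  nlinarith [mul_pos ha hr]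

lemma aux_sqrt {a r z : ℝ} (ha : 0 < a) (hr : 0 < r)
    (h : z^3 + a*r*z^2 + (r+1)*z + a*r^2 = 0) :
    Real.sqrt ((a*z^2+z)^2 - 4*a*(z^3+z)) = a*z^2 + z + 2*a*r := by
  have ht := aux_pos_t ha hr h
  have hD : (a*z^2+z)^2 - 4*a*(z^3+z) = (a*z^2 + z + 2*a*r)^2 := by
    linear_combination -4*a*h
  rw [hD, Real.sqrt_sq ht.le]

lemma rho_pos {a t : ℝ} (ha : 0 < a) (ht : t < 0) : 0 < rho a t := by
  have hD := aux_D_pos ha ht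
  have hs0 : 0 ≤ Real.sqrt ((a*t^2+t)^2 - 4*a*(t^3+t)) := Real.sqrt_nonneg _
  have hs2 : (Real.sqrt ((a*t^2+t)^2 - 4*a*(t^3+t)))^2 = (a*t^2+t)^2 - 4*a*(t^3+t) :=
    Real.sq_sqrt hD.le
  have hgt : a*t^2+t < Real.sqrt ((a*t^2+t)^2 - 4*a*(t^3+t)) := by
    nlinarith [mul_pos ha (mul_pos (neg_pos.2 ht) (by nlinarith [sq_nonneg t] : (0:ℝ) < t^2+1)),
      sq_nonneg (Real.sqrt ((a*t^2+t)^2 - 4*a*(t^3+t)) + (a*t^2+t))]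
  unfold rho
  have h2a : 0 < 2*a := by linarith
  apply div_pos _ h2a
  linarith

lemma rho_isRoot {a t : ℝ} (ha : 0 < a) (ht : t < 0) :
    t^3 + a*(rho a t)*t^2 + ((rho a t)+1)*t + a*(rho a t)^2 = 0 := by
  have hD := aux_D_pos ha ht
  have hs_eq : Real.sqrt ((a*t^2+t)^2 - 4*a*(t^3+t)) = 2*a*(rho a t) + (a*t^2+t) := by
    unfold rho
    field_simp
    ring
  have key : (a*t^2+t)^2 - 4*a*(t^3+t) = (2*a*(rho a t) + (a*t^2+t))^2 := by
    rw [← hs_eq, Real.sq_sqrt hD.le]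
  have key2 : (4*a)*(a*(rho a t)^2 + (rho a t)*(a*t^2+t) + (t^3+t)) = (4*a)*0 := by
    linear_combination -key
  have key3 := mul_left_cancel₀ (by positivity : (4:ℝ)*a ≠ 0) key2
  linear_combination key3

lemma rho_eq_of_root {a r z : ℝ} (ha : 0 < a) (hr : 0 < r)
    (h : z^3 + a*r*z^2 + (r+1)*z + a*r^2 = 0) : rho a z = r := by
  unfold rho
  rw [aux_sqrt ha hr h]
  field_simp
  ring

lemma rho_hasDerivAt {a t : ℝ} (ha : 0 < a) (ht : t < 0) :
    HasDerivAt (rho a)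
      ((-(2*a*t+1) + 1/(2*Real.sqrt ((a*t^2+t)^2 - 4*a*(t^3+t)))
          * (2*(a*t^2+t)*(2*a*t+1) - 4*a*(3*t^2+1)))/(2*a)) t := by
  have hp2 : HasDerivAt (fun x : ℝ => a*x^2+x) (2*a*t+1) t := by
    have := ((hasDerivAt_pow 2 t).const_mul a).add (hasDerivAt_id' t)
    exact this.congr_deriv (by norm_num; ring)
  have hDf : HasDerivAt (fun x : ℝ => (a*x^2+x)^2 - 4*a*(x^3+x))
      (2*(a*t^2+t)*(2*a*t+1) - 4*a*(3*t^2+1)) t := by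
    have h1 := hp2.pow 2
    have h2 := ((hasDerivAt_pow 3 t).add (hasDerivAt_id' t)).const_mul (4*a)
    exact (h1.sub h2).congr_deriv (by norm_num)
  have hsqrt : HasDerivAt (fun x : ℝ => Real.sqrt ((a*x^2+x)^2 - 4*a*(x^3+x)))
      (1/(2*Real.sqrt ((a*t^2+t)^2 - 4*a*(t^3+t)))
        * (2*(a*t^2+t)*(2*a*t+1) - 4*a*(3*t^2+1))) t := by
    have := (Real.hasDerivAt_sqrt (ne_of_gt (aux_D_pos ha ht))).comp t hDf
    simpa [Function.comp_def] using this
  exact ((hp2.neg).add hsqrt).div_const (2*a)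

lemma rho_deriv_value {a r z : ℝ} (ha : 0 < a) (hr : 0 < r)
    (h : z^3 + a*r*z^2 + (r+1)*z + a*r^2 = 0) :
    (-(2*a*z+1) + 1/(2*Real.sqrt ((a*z^2+z)^2 - 4*a*(z^3+z)))
        * (2*(a*z^2+z)*(2*a*z+1) - 4*a*(3*z^2+1)))/(2*a)
      = -(3*z^2+2*a*r*z+(r+1))/(a*z^2+z+2*a*r) := by
  rw [aux_sqrt ha hr h]
  have hT := aux_pos_t ha hr h
  have hT2 : z * (a * z + 1) + 2 * a * r ≠ 0 := by nlinarith
  field_simp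
  ring

lemma rho_strictAnti {a : ℝ} (ha : 0 < a) (hA : a^2 ≤ 1/8) :
    StrictAntiOn (rho a) (Set.Iio 0) := by
  apply strictAntiOn_of_deriv_neg (convex_Iio 0)
  · exact (by unfold rho; fun_prop : Continuous (rho a)).continuousOn
  · rw [interior_Iio]
    intro t ht
    have hd := rho_hasDerivAt ha ht
    rw [hd.deriv]
    have hr' := rho_pos ha ht
    have hroot := rho_isRoot ha ht
    rw [rho_deriv_value ha hr' hroot]
    exact div_neg_of_neg_of_pos (by linarith [aux_gp ha hA hr' hroot])
      (aux_pos_t ha hr' hroot)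

/-- for `0 < a ≤ √2/4`, the cubic `z³ + a r z² + (r+1) z + a r²`
has exactly one real root `σ(r)` for each `r > 0`; it satisfies `g′(σ(r)) > 0`,
and (for any function `σ` selecting these roots) `σ` is strictly decreasing on
`(0,∞)`, with `dσ/dr = −(aσ² + σ + 2ar)/g′(σ) < 0` for all `r > 0`. -/
theorem stmt11 (a : ℝ) (ha : 0 < a) (ha' : a ≤ Real.sqrt 2 / 4) :
    (∀ r : ℝ, 0 < r → ∃! σ : ℝ, σ^3 + a*r*σ^2 + (r+1)*σ + a*r^2 = 0) ∧
    (∀ σ : ℝ → ℝ,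
      (∀ r : ℝ, 0 < r → (σ r)^3 + a*r*(σ r)^2 + (r+1)*(σ r) + a*r^2 = 0) →
      (∀ r : ℝ, 0 < r → 0 < 3*(σ r)^2 + 2*a*r*(σ r) + (r+1)) ∧
      (∀ r : ℝ, 0 < r →
        HasDerivAt σ
          (-(a*(σ r)^2 + σ r + 2*a*r) / (3*(σ r)^2 + 2*a*r*(σ r) + (r+1))) r ∧
        -(a*(σ r)^2 + σ r + 2*a*r) / (3*(σ r)^2 + 2*a*r*(σ r) + (r+1)) < 0) ∧
      StrictAntiOn σ (Set.Ioi 0)) := by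
  have hA : a^2 ≤ 1/8 := aux_asq ha ha'
  constructor
  · intro r hr
    obtain ⟨z, hz⟩ := aux_exists ha hr
    exact ⟨z, hz, fun y hy => aux_uniq ha hA hr hy hz⟩
  · intro σ hσ
    have hneg : ∀ r : ℝ, 0 < r → σ r < 0 := fun r hr => aux_neg ha hr (hσ r hr)
    have hrho : ∀ r : ℝ, 0 < r → rho a (σ r) = r := fun r hr => rho_eq_of_root ha hr (hσ r hr)
    have hanti : StrictAntiOn σ (Set.Ioi 0) := by
      intro r1 h1 r2 h2 h12
      rw [Set.mem_Ioi] at h1 h2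
      rcases lt_trichotomy (σ r2) (σ r1) with h | h | h
      · exact h
      · exfalso
        have := hrho r1 h1
        rw [← h, hrho r2 h2] at this
        exact absurd this (ne_of_gt h12)
      · exfalso
        have := rho_strictAnti ha hA (hneg r1 h1) (hneg r2 h2) h
        rw [hrho r1 h1, hrho r2 h2] at this
        exact absurd this (not_lt.2 h12.le)
    have hgp' : ∀ r : ℝ, 0 < r → 0 < 3*(σ r)^2 + 2*a*r*(σ r) + (r+1) :=
      fun r hr => aux_gp ha hA hr (hσ r hr)
    refine ⟨hgp', ?_, hanti⟩
    intro r hr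
    have hz := hσ r hr
    have hzneg := hneg r hr
    have hT := aux_pos_t ha hr hz
    have hgp := hgp' r hr
    have hcont : ContinuousAt σ r := by
      rw [Metric.continuousAt_iff]
      intro ε hε
      set ε' := min ε (-(σ r)/2) with hε'def
      have hε'pos : 0 < ε' := lt_min hε (by linarith)
      have hε'le : ε' ≤ ε := min_le_left _ _
      have hzε : σ r + ε' < 0 := by
        have : ε' ≤ -(σ r)/2 := min_le_right _ _
        linarith
      have hzε' : σ r - ε' < 0 := by linarith
      have hgt : r < rho a (σ r - ε') := by
        have := rho_strictAnti ha hA (Set.mem_Iio.2 hzε') (Set.mem_Iio.2 hzneg) (by linarith)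
        rwa [hrho r hr] at this
      have hlt : rho a (σ r + ε') < r := by
        have := rho_strictAnti ha hA (Set.mem_Iio.2 hzneg) (Set.mem_Iio.2 hzε) (by linarith)
        rwa [hrho r hr] at this
      refine ⟨min r (min (rho a (σ r - ε') - r) (r - rho a (σ r + ε'))),
        lt_min hr (lt_min (by linarith) (by linarith)), ?_⟩
      intro y hy
      set δ := min r (min (rho a (σ r - ε') - r) (r - rho a (σ r + ε'))) with hδdef
      rw [Real.dist_eq] at hy ⊢
      have hy1 := abs_lt.1 hy
      have hδr : δ ≤ r := min_le_left _ _
      have hδ1 : δ ≤ rho a (σ r - ε') - r := le_trans (min_le_right _ _) (min_le_left _ _)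
      have hδ2 : δ ≤ r - rho a (σ r + ε') := le_trans (min_le_right _ _) (min_le_right _ _)
      have hypos : 0 < y := by linarith [hy1.1]
      have hyneg := hneg y hypos
      have hyrho := hrho y hypos
      have hb1 : σ r - ε' < σ y := by
        by_contra hc
        push_neg at hc
        have h5 : rho a (σ r - ε') ≤ rho a (σ y) := by
          rcases eq_or_lt_of_le hc with hceq | hclt
          · rw [hceq]
          · exact (rho_strictAnti ha hA (Set.mem_Iio.2 hyneg)
              (Set.mem_Iio.2 hzε') hclt).le
        rw [hyrho] at h5
        linarith [hy1.2]
      have hb2 : σ y < σ r + ε' := by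
        by_contra hc
        push_neg at hc
        have h5 : rho a (σ y) ≤ rho a (σ r + ε') := by
          rcases eq_or_lt_of_le hc with hceq | hclt
          · rw [← hceq]
          · exact (rho_strictAnti ha hA (Set.mem_Iio.2 hzε)
              (Set.mem_Iio.2 hyneg) hclt).le
        rw [hyrho] at h5
        linarith [hy1.1]
      rw [abs_lt]
      constructor <;> [linarith; linarith]
    have hdz : HasDerivAt (rho a)
        (-(3*(σ r)^2+2*a*r*(σ r)+(r+1))/(a*(σ r)^2+(σ r)+2*a*r)) (σ r) := by
      have := rho_hasDerivAt ha hzneg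
      rwa [rho_deriv_value ha hr hz] at this
    have hne0 : -(3*(σ r)^2+2*a*r*(σ r)+(r+1))/(a*(σ r)^2+(σ r)+2*a*r) ≠ 0 :=
      ne_of_lt (div_neg_of_neg_of_pos (by linarith) hT)
    have hev : ∀ᶠ y in nhds r, rho a (σ y) = y := by
      filter_upwards [Ioi_mem_nhds hr] with y hy
      exact hrho y hy
    have hder := HasDerivAt.of_local_left_inverse hcont hdz hne0 hev
    have hval : (-(3*(σ r)^2+2*a*r*(σ r)+(r+1))/(a*(σ r)^2+(σ r)+2*a*r))⁻¹
        = -(a*(σ r)^2 + σ r + 2*a*r) / (3*(σ r)^2 + 2*a*r*(σ r) + (r+1)) := by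
      rw [inv_div, div_neg, neg_div]
    rw [hval] at hder
    refine ⟨hder, div_neg_of_neg_of_pos (by linarith) hgp⟩
end

section
/- Fix a with 0 < a < √2/4, for r > 0 let σ(r) be the unique real root of g(z) = z³ + a r z² + (r+1) z + a r², and define φ(r) = 3σ(r)² + 2 a r σ(r) − a²r² + 4(r+1). Then φ(r) > 0 for all r > 0, and moreover 3/(a²r²) + 4r ≤ φ(r) ≤ 4(1+r) for all r > √6/(2a). -/
lemma aux12 (a r s : ℝ) (ha : 0 < a) (hr : 0 < r)
    (h : s^3 + a*r*s^2 + (r+1)*s + a*r^2 = 0) :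
    s < 0 ∧ 0 < a*r + s ∧ (a*r + s)*(s^2+r+1) = a*r ∧ a*r^2 ≤ (-s)*(r+1) := by
  have hs : s < 0 := by
    by_contra h'
    push_neg at h'
    nlinarith [pow_nonneg h' 3, mul_nonneg (mul_nonneg ha.le hr.le) (sq_nonneg s),
      mul_nonneg (by linarith : (0:ℝ) ≤ r + 1) h', mul_pos ha (pow_pos hr 2)]
  have hsub : (a*r + s)*(s^2+r+1) = a*r := by linear_combination h
  have hD : 0 < s^2 + r + 1 := by positivity
  have hpos : 0 < a*r + s := by nlinarith [mul_pos ha hr]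
  have hlw : (-s)*(r+1) - a*r^2 = (a*r+s)*s^2 := by linear_combination -h
  have hlow : a*r^2 ≤ (-s)*(r+1) := by nlinarith [mul_nonneg hpos.le (sq_nonneg s)]
  exact ⟨hs, hpos, hsub, hlow⟩

set_option maxHeartbeats 1000000 in
/-- for `0 < a < √2/4`, with `σ(r)` the (unique) real root of
`z³ + a r z² + (r+1) z + a r²` and `φ(r) = 3σ(r)² + 2arσ(r) − a²r² + 4(r+1)`,
one has `φ(r) > 0` for all `r > 0`, and
`3/(a²r²) + 4r ≤ φ(r) ≤ 4(1+r)` for all `r > √6/(2a)`. -/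
theorem stmt12 (a : ℝ) (ha : 0 < a) (ha' : a < Real.sqrt 2 / 4)
    (σ : ℝ → ℝ)
    (hσ : ∀ r : ℝ, 0 < r → (σ r)^3 + a*r*(σ r)^2 + (r+1)*(σ r) + a*r^2 = 0) :
    (∀ r : ℝ, 0 < r → 0 < 3*(σ r)^2 + 2*a*r*(σ r) - a^2*r^2 + 4*(r+1)) ∧
    (∀ r : ℝ, Real.sqrt 6 / (2*a) < r →
      3/(a^2*r^2) + 4*r ≤ 3*(σ r)^2 + 2*a*r*(σ r) - a^2*r^2 + 4*(r+1) ∧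
      3*(σ r)^2 + 2*a*r*(σ r) - a^2*r^2 + 4*(r+1) ≤ 4*(1+r)) := by
  have ha2 : a^2 < 1/8 := by
    have h2 : (Real.sqrt 2)^2 = 2 := Real.sq_sqrt (by norm_num)
    nlinarith [Real.sqrt_nonneg 2, ha]
  constructor
  · intro r hr
    obtain ⟨hs, hpos, hsub, hlow⟩ := aux12 a r (σ r) ha hr (hσ r hr)
    set s := σ r
    have hPD : (a*r+s)*(a*r-3*s)*(s^2+r+1) = a*r*(a*r-3*s) := by
      linear_combination (a*r-3*s) * hsub
    nlinarith [hPD, mul_pos ha hr, sq_nonneg s, mul_pos hpos hr,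
      mul_nonneg hpos.le (sq_nonneg s),
      mul_nonneg (mul_nonneg hpos.le (by nlinarith : (0:ℝ) ≤ a*r - 3*s)) hr.le]
  · intro r hr2
    have hr : 0 < r := lt_trans (by positivity) hr2
    obtain ⟨hs, hpos, hsub, hlow⟩ := aux12 a r (σ r) ha hr (hσ r hr)
    set s := σ r
    have hX : 3/2 < a^2*r^2 := by
      have h6 : Real.sqrt 6 < 2*a*r := by
        rw [div_lt_iff₀ (by positivity)] at hr2; linarith
      nlinarith [Real.sq_sqrt (by norm_num : (0:ℝ) ≤ 6), Real.sqrt_nonneg 6]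
    have hr3 : 3 < r := by nlinarith
    have hlow2 : a^2*r^4 ≤ s^2*(r+1)^2 := by
      nlinarith [hlow, mul_pos ha (mul_pos hr hr)]
    have hs2le : s^2 ≤ a^2*r^2 := by nlinarith
    have hart : 0 ≤ a^2*r^2 + a*r*s := by nlinarith [mul_pos ha hr]
    -- certificate pieces
    have h1 : 0 ≤ (a^2*r^2)*(s^2*(r+1)^2 - a^2*r^4) :=
      mul_nonneg (by positivity) (by linarith)
    have h2 : 0 ≤ (a^2*r^2)*((a^2*r^2 + a*r*s)*(r+1)^2) :=
      mul_nonneg (by positivity) (mul_nonneg hart (by positivity))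
    have h3 : 0 ≤ (a^2*r^2 - s^2)*(r+1)^2 :=
      mul_nonneg (by linarith) (by positivity)
    have h4 : 0 ≤ (a^2*r^2)*((r^2/8 - a^2*r^2)*(2*r+1)) :=
      mul_nonneg (by positivity) (mul_nonneg (by nlinarith) (by linarith))
    have h5 : 0 ≤ (a^2*r^2 - 3/2)*(3*r^3 + 17/2*r^2 + 6*r + 1) :=
      mul_nonneg (by linarith) (by positivity)
    have h6 : 0 ≤ 3/2*r^3 + 15/4*r^2 - 3/2 := by nlinarith
    have hE' : 3*(s^2+r+1)*(r+1)^2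
        ≤ (a^2*r^2*(4*s^2+4*(r+1) + 3*a*r*s - a^2*r^2))*(r+1)^2 := by
      linarith [h1, h2, h3, h4, h5, h6]
    have hE : 3*(s^2+r+1) ≤ a^2*r^2*(4*s^2+4*(r+1) + 3*a*r*s - a^2*r^2) :=
      le_of_mul_le_mul_right hE' (by positivity)
    have hD : 0 < s^2 + r + 1 := by positivity
    have hPD : (a*r+s)*(a*r-3*s)*(s^2+r+1) = a*r*(a*r-3*s) := by
      linear_combination (a*r-3*s) * hsub
    have step : 3 ≤ a^2*r^2*(4 - (a*r+s)*(a*r-3*s)) := by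
      have h9 : a^2*r^2*(4 - (a*r+s)*(a*r-3*s)) * (s^2+r+1)
          = a^2*r^2*(4*s^2+4*(r+1) + 3*a*r*s - a^2*r^2) := by
        linear_combination (-(a^2*r^2)) * hPD
      have h10 : 3*(s^2+r+1) ≤ a^2*r^2*(4 - (a*r+s)*(a*r-3*s)) * (s^2+r+1) := by
        rw [h9]; exact hE
      exact le_of_mul_le_mul_right h10 hD
    have hden : 0 < a^2*r^2 := by positivity
    constructor
    · rw [div_add' _ _ _ (ne_of_gt hden), div_le_iff₀ hden]
      have hid : (3*s^2 + 2*a*r*s - a^2*r^2 + 4*(r+1))*(a^2*r^2)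
          = a^2*r^2*(4 - (a*r+s)*(a*r-3*s)) + 4*r*(a^2*r^2) := by ring
      linarith [step]
    · have h3s : 0 ≤ a*r - 3*s := by nlinarith
      have hP : 0 ≤ (a*r+s)*(a*r-3*s) := mul_nonneg hpos.le h3s
      have hid : 4*(1+r) - (3*s^2 + 2*a*r*s - a^2*r^2 + 4*(r+1))
          = (a*r+s)*(a*r-3*s) := by ring
      linarith
end

section
/- Fix a > 0 and r > 0, and set c₂ = ar, c₁ = r+1, c₀ = ar², S = 2c₂³ − 9c₂c₁ + 27c₀ and R = S² − 4(c₂² − 3c₁)³ (the quantities attached to the cubic z³ + c₂z² + c₁z + c₀). Then R = 27[4(1+r)³ + a²r²(8r² − 20r − 1) + 4a⁴r⁵] = 27[4 + 12r + (12 − a²)r² + (4 − 20a²)r³ + 8a²r⁴ + 4a⁴r⁵]. Consequently, if a ≤ 1/√5, then R > 0 for all r > 0, so the cubic z³ + arz² + (r+1)z + ar² has one real root and two non-real complex conjugate roots for every r > 0. -/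
/-- with `c₂ = ar`, `c₁ = r+1`, `c₀ = ar²`,
`S = 2c₂³ − 9c₂c₁ + 27c₀` and `R = S² − 4(c₂² − 3c₁)³`, one has the two
closed forms of `R`, and if `a ≤ 1/√5` then `R > 0`, so the cubic
`z³ + arz² + (r+1)z + ar²` has one real root and two non-real complex
conjugate roots. -/
theorem stmt14 (a r : ℝ) (ha : 0 < a) (hr : 0 < r) :
    ((2*(a*r)^3 - 9*(a*r)*(r+1) + 27*(a*r^2))^2 - 4*((a*r)^2 - 3*(r+1))^3
      = 27*(4*(1+r)^3 + a^2*r^2*(8*r^2 - 20*r - 1) + 4*a^4*r^5)) ∧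
    ((2*(a*r)^3 - 9*(a*r)*(r+1) + 27*(a*r^2))^2 - 4*((a*r)^2 - 3*(r+1))^3
      = 27*(4 + 12*r + (12 - a^2)*r^2 + (4 - 20*a^2)*r^3 + 8*a^2*r^4 + 4*a^4*r^5)) ∧
    (a ≤ 1 / Real.sqrt 5 →
      0 < (2*(a*r)^3 - 9*(a*r)*(r+1) + 27*(a*r^2))^2 - 4*((a*r)^2 - 3*(r+1))^3 ∧
      ∃ (s : ℝ) (χ : ℂ), χ.im ≠ 0 ∧
        ∀ z : ℂ, z^3 + (a:ℂ)*(r:ℂ)*z^2 + ((r:ℂ)+1)*z + (a:ℂ)*(r:ℂ)^2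
          = (z - (s:ℂ)) * (z - χ) * (z - (starRingEnd ℂ) χ)) := by
  refine ⟨by ring, by ring, fun hle => ?_⟩
  -- a² ≤ 1/5
  have h5 : (Real.sqrt 5) ^ 2 = 5 := Real.sq_sqrt (by norm_num)
  have h5pos : 0 < Real.sqrt 5 := Real.sqrt_pos.mpr (by norm_num)
  have ha2 : a ^ 2 ≤ 1 / 5 := by
    have h1 : a * Real.sqrt 5 ≤ 1 := by
      have := (le_div_iff₀ h5pos).mp hle
      linarith
    nlinarith [sq_nonneg (a * Real.sqrt 5 - 1)]
  -- R > 0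
  have hRpos : 0 < (2*(a*r)^3 - 9*(a*r)*(r+1) + 27*(a*r^2))^2 - 4*((a*r)^2 - 3*(r+1))^3 := by
    have h2 : 0 ≤ (1/5 - a^2) * r^3 := by
      apply mul_nonneg (by linarith) (pow_pos hr 3).le
    have h3 : 0 < (12 - a^2) * r^2 := by
      apply mul_pos (by linarith) (pow_pos hr 2)
    nlinarith [mul_nonneg (mul_nonneg (sq_nonneg a) (sq_nonneg a)) (pow_pos hr 5).le,
      mul_nonneg (sq_nonneg a) (pow_pos hr 4).le, hr.le]
  refine ⟨hRpos, ?_⟩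
  -- find real root s by IVT
  set f : ℝ → ℝ := fun x => x^3 + a*r*x^2 + (r+1)*x + a*r^2 with hf
  set t : ℝ := 1 + a*r + (r+1) + a*r^2 with htdef
  have ht1 : 1 ≤ t := by nlinarith [mul_pos ha hr, mul_pos ha (pow_pos hr 2)]
  have hft : f (-t) < 0 := by
    simp only [hf]
    have h2 : 1 ≤ t^2 := by nlinarith
    have h3 : a*r^2*1 ≤ a*r^2*t^2 :=
      mul_le_mul_of_nonneg_left h2 (by positivity)
    nlinarith [mul_pos (by linarith : (0:ℝ) < r+1) (by linarith : (0:ℝ) < t),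
      mul_nonneg (by linarith : (0:ℝ) ≤ r+1) (sq_nonneg t), sq_nonneg t]
  have hf0 : 0 < f 0 := by simp [hf]; positivity
  have hcont : ContinuousOn f (Set.Icc (-t) 0) := by
    apply Continuous.continuousOn; fun_prop
  have hmem : (0:ℝ) ∈ Set.Icc (f (-t)) (f 0) := ⟨hft.le, hf0.le⟩
  obtain ⟨s, _, hs0⟩ := intermediate_value_Icc (by linarith : -t ≤ 0) hcont hmem
  -- quadratic factor
  set p : ℝ := a*r + s with hpdef
  set q : ℝ := r + 1 + s * p with hqdef
  have hs0' : s^3 + a*r*s^2 + (r+1)*s + a*r^2 = 0 := hs0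
  have key : (2*(a*r)^3 - 9*(a*r)*(r+1) + 27*(a*r^2))^2 - 4*((a*r)^2 - 3*(r+1))^3
      = -27 * (s^2 + p*s + q)^2 * (p^2 - 4*q) := by
    simp only [hpdef, hqdef]
    linear_combination (-729*s^3 - 729*(a*r)*s^2 - 729*r*s - 729*s
      + 108*a^3*r^3 + 243*a*r^2 - 486*a*r) * hs0'
  have hdisc : p^2 - 4*q < 0 := by
    by_contra h
    push_neg at h
    nlinarith [sq_nonneg (s^2 + p*s + q)]
  set v : ℝ := Real.sqrt (4*q - p^2) / 2 with hvdef
  have hv2 : v^2 = (4*q - p^2)/4 := by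
    rw [hvdef, div_pow, Real.sq_sqrt (by linarith)]
    norm_num
  have hvpos : 0 < v := by
    rw [hvdef]
    exact div_pos (Real.sqrt_pos.mpr (by linarith)) two_pos
  refine ⟨s, (↑(-p/2) : ℂ) + ↑v * Complex.I, ?_, ?_⟩
  · simp [Complex.add_im, Complex.ofReal_im, Complex.mul_im]
    exact hvpos.ne'
  · intro z
    have hconj : (starRingEnd ℂ) ((↑(-p/2) : ℂ) + ↑v * Complex.I)
        = (↑(-p/2) : ℂ) - ↑v * Complex.I := by
      rw [map_add, map_mul, Complex.conj_ofReal, Complex.conj_ofReal, Complex.conj_I]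
      ring
    rw [hconj]
    have hpC : (p:ℂ) = (a:ℂ)*(r:ℂ) + (s:ℂ) := by
      rw [hpdef]; push_cast; ring
    have hqC : (q:ℂ) = (r:ℂ) + 1 + (s:ℂ)*(p:ℂ) := by
      rw [hqdef]; push_cast; ring
    have hv2C : (v:ℂ)^2 = (4*(q:ℂ) - (p:ℂ)^2)/4 := by
      rw [← Complex.ofReal_pow, hv2]; push_cast; ring
    have hsC : (s:ℂ)^3 + (a:ℂ)*(r:ℂ)*(s:ℂ)^2 + ((r:ℂ)+1)*(s:ℂ) + (a:ℂ)*(r:ℂ)^2 = 0 := by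
      exact_mod_cast congrArg (fun x : ℝ => (x:ℂ)) hs0'
    push_cast
    linear_combination ((z-(s:ℂ))*(v:ℂ)^2) * Complex.I_sq - (z-(s:ℂ)) * hv2C
      + (-z^2 + (s:ℂ)^2) * hpC + (-z + (s:ℂ)) * hqC + hsC
end

section
/- Fix a with 0 < a ≤ √2/4 and for r > 0 let σ(r) be the unique real root of g(z) = z³ + a r z² + (r+1) z + a r². Then σ(r) = −ar² + ar³ − ar⁴ + O(r⁵) as r → 0⁺; that is, there exist constants C > 0 and r₀ > 0 such that |σ(r) + ar² − ar³ + ar⁴| ≤ C r⁵ for all 0 < r < r₀. -/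
set_option maxHeartbeats 1000000 in
/-- for `0 < a ≤ √2/4` and `σ(r)` the (unique) real root of
`z³ + arz² + (r+1)z + ar²`, one has
`σ(r) = −ar² + ar³ − ar⁴ + O(r⁵)` as `r → 0⁺`. -/
theorem stmt15 (a : ℝ) (ha : 0 < a) (ha' : a ≤ Real.sqrt 2 / 4)
    (σ : ℝ → ℝ)
    (hσ : ∀ r : ℝ, 0 < r → (σ r)^3 + a*r*(σ r)^2 + (r+1)*(σ r) + a*r^2 = 0) :
    ∃ C : ℝ, 0 < C ∧ ∃ r₀ : ℝ, 0 < r₀ ∧ ∀ r : ℝ, 0 < r → r < r₀ →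
      |σ r + a*r^2 - a*r^3 + a*r^4| ≤ C * r^5 := by
  have h2 : Real.sqrt 2 ≤ 2 := by
    nlinarith [Real.sq_sqrt (by norm_num : (0:ℝ) ≤ 2), Real.sqrt_nonneg 2]
  have ha1 : a ≤ 1/2 := by linarith
  clear ha' h2
  refine ⟨2*a, by positivity, 1/2, by norm_num, ?_⟩
  intro r hr hr2
  have h := hσ r hr
  clear hσ
  obtain ⟨s, hs⟩ : ∃ s, s = σ r := ⟨_, rfl⟩
  rw [← hs] at h ⊢
  obtain ⟨p, hp⟩ : ∃ p : ℝ, p = -a*r^2 + a*r^3 - a*r^4 := ⟨_, rfl⟩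
  obtain ⟨u, hu⟩ : ∃ u : ℝ, u = 1 - r + r^2 := ⟨_, rfl⟩
  have hu1 : u ≤ 1 := by rw [hu]; nlinarith
  have hu0 : 0 ≤ u := by rw [hu]; nlinarith
  have hru : 0 ≤ 1 - r*u := by rw [hu]; nlinarith
  have hru1 : 1 - r*u ≤ 1 := by rw [hu]; nlinarith
  have haq : a^2 ≤ 1/4 := by nlinarith
  have huq : u^2 ≤ 1 := by nlinarith
  -- value of the cubic at p
  have hEval : p^3 + a*r*p^2 + (r+1)*p + a*r^2
      = a*r^5 * (a^2*u^2*(1 - r*u) - 1) := by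
    rw [hp, hu]; ring
  have hau : a^2*u^2 ≤ 1/4 := by
    have := mul_le_mul haq huq (sq_nonneg u) (by norm_num : (0:ℝ) ≤ 1/4)
    linarith
  have hauu : a^2*u^2*(1 - r*u) ≤ 1 := by
    have := mul_le_mul hau hru1 hru (by norm_num : (0:ℝ) ≤ 1/4)
    linarith
  have hinner0 : a^2*u^2*(1 - r*u) - 1 ≤ 0 := by linarith
  have hinner1 : -1 ≤ a^2*u^2*(1 - r*u) - 1 := by
    have := mul_nonneg (mul_nonneg (sq_nonneg a) (sq_nonneg u)) hru
    linarith
  have hE : |p^3 + a*r*p^2 + (r+1)*p + a*r^2| ≤ a * r^5 := by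
    rw [hEval, abs_mul, abs_of_pos (by positivity : (0:ℝ) < a*r^5)]
    exact mul_le_of_le_one_right (by positivity) (abs_le.mpr ⟨hinner1, by linarith⟩)
  -- bounds on p and a*r
  have hu0' : (0:ℝ) ≤ 1 - r + r^2 := by nlinarith
  have hpneg : p ≤ 0 := by
    rw [hp]
    nlinarith [mul_nonneg (mul_nonneg ha.le (sq_nonneg r)) hu0']
  have hplb : -(1:ℝ)/8 ≤ p := by
    rw [hp]
    nlinarith [mul_nonneg (mul_nonneg ha.le (pow_nonneg hr.le 3))
        (by linarith : (0:ℝ) ≤ 1 - r),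
      mul_nonneg (by linarith : (0:ℝ) ≤ 1/2 - a) (sq_nonneg r),
      mul_pos (by linarith : (0:ℝ) < 1/2 - r) (by linarith : (0:ℝ) < 1/2 + r)]
  have har0 : 0 ≤ a*r := le_of_lt (mul_pos ha hr)
  have har : a*r ≤ 1/4 := by
    nlinarith [mul_nonneg (by linarith : (0:ℝ) ≤ 1/2 - a) hr.le]
  -- the quadratic factor is at least 1/2
  have hQ : (1:ℝ)/2 ≤ s^2 + s*p + p^2 + a*r*(s+p) + (r+1) := by
    nlinarith [sq_nonneg (2*s + p + a*r), sq_nonneg p,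
      mul_nonneg (by linarith : (0:ℝ) ≤ 1/4 - a*r) (by linarith : (0:ℝ) ≤ -p),
      mul_nonneg (by linarith : (0:ℝ) ≤ 1/4 - a*r) har0]
  -- factorization
  have hfac : (s - p) * (s^2 + s*p + p^2 + a*r*(s+p) + (r+1))
      = -(p^3 + a*r*p^2 + (r+1)*p + a*r^2) := by
    linear_combination h
  have habs : |s - p| * (s^2 + s*p + p^2 + a*r*(s+p) + (r+1)) ≤ a * r^5 := by
    calc |s - p| * (s^2 + s*p + p^2 + a*r*(s+p) + (r+1))
        = |(s - p) * (s^2 + s*p + p^2 + a*r*(s+p) + (r+1))| := by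
          rw [abs_mul, abs_of_pos (by linarith : (0:ℝ) < s^2 + s*p + p^2 + a*r*(s+p) + (r+1))]
      _ = |p^3 + a*r*p^2 + (r+1)*p + a*r^2| := by rw [hfac, abs_neg]
      _ ≤ a * r^5 := hE
  have hfin : |s - p| ≤ 2*a*r^5 := by
    nlinarith [abs_nonneg (s - p),
      mul_nonneg (abs_nonneg (s - p))
        (by linarith : (0:ℝ) ≤ s^2 + s*p + p^2 + a*r*(s+p) + (r+1) - 1/2)]
  have heq : s + a*r^2 - a*r^3 + a*r^4 = s - p := by rw [hp]; ring
  rw [heq]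
  linarith [hfin]
end

section
/- Fix a with 0 < a ≤ √2/4 and for r > 0 let σ(r) be the unique real root of g(z) = z³ + a r z² + (r+1) z + a r². Then σ(r) = −ar + 1/(ar) − 1/(a³r²) + O(r⁻³) as r → ∞; that is, there exist constants C > 0 and r₀ > 0 such that |σ(r) + ar − 1/(ar) + 1/(a³r²)| ≤ C r⁻³ for all r > r₀. -/
set_option maxHeartbeats 2000000 in
/-- for `0 < a ≤ √2/4` and `σ(r)` the (unique) real root of
`z³ + arz² + (r+1)z + ar²`, one has
`σ(r) = −ar + 1/(ar) − 1/(a³r²) + O(r⁻³)` as `r → ∞`. -/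
theorem stmt16 (a : ℝ) (ha : 0 < a) (ha' : a ≤ Real.sqrt 2 / 4)
    (σ : ℝ → ℝ)
    (hσ : ∀ r : ℝ, 0 < r → (σ r)^3 + a*r*(σ r)^2 + (r+1)*(σ r) + a*r^2 = 0) :
    ∃ C : ℝ, 0 < C ∧ ∃ r₀ : ℝ, 0 < r₀ ∧ ∀ r : ℝ, r₀ < r →
      |σ r + a*r - 1/(a*r) + 1/(a^3*r^2)| ≤ C / r^3 := by
  refine ⟨(36*a^2+72)/a^5, by positivity, 2 + 2/a + 1/a^2, by positivity, ?_⟩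
  intro r hr
  have hpa : (0:ℝ) < 2/a := by positivity
  have hpa2 : (0:ℝ) < 1/a^2 := by positivity
  have hr2 : (2:ℝ) ≤ r := by linarith
  have hr0 : (0:ℝ) < r := by linarith
  have har2 : (2:ℝ) ≤ a*r := by
    have h1 : 2/a < r := by linarith
    have := mul_lt_mul_of_pos_left h1 ha
    calc (2:ℝ) = a*(2/a) := by field_simp
      _ ≤ a*r := this.le
  have ha2r : (1:ℝ) ≤ a^2*r := by
    have h1 : 1/a^2 < r := by linarith
    have := mul_lt_mul_of_pos_left h1 (by positivity : (0:ℝ) < a^2)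
    calc (1:ℝ) = a^2*(1/a^2) := by field_simp
      _ ≤ a^2*r := this.le
  have h := hσ r hr0
  set s := σ r with hs
  have huD : (s + a*r) * (s^2 + r + 1) = a*r := by linear_combination h
  have hD_pos : (0:ℝ) < s^2 + r + 1 := by positivity
  have hu_pos : 0 < s + a*r := by
    rcases lt_trichotomy (s + a*r) 0 with h1|h1|h1
    · nlinarith [mul_pos ha hr0]
    · nlinarith [mul_pos ha hr0]
    · exact h1
  have hu_a : s + a*r ≤ a := by
    nlinarith [mul_nonneg hu_pos.le (sq_nonneg s)]
  have hs_neg : s ≤ -(a*r)/2 := by nlinarith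
  have hD_lb : a^2*r^2/4 ≤ s^2 + r + 1 := by
    nlinarith [mul_nonneg (by linarith : (0:ℝ) ≤ -(s + a*r/2))
      (by nlinarith : (0:ℝ) ≤ -(s - a*r/2))]
  have hu4 : (s + a*r)*(a*r) ≤ 4 := by
    nlinarith [mul_le_mul_of_nonneg_left hD_lb hu_pos.le, mul_pos ha hr0]
  have hAp : 0 ≤ r*(a^2*r-1)*(s+a*r)^2 :=
    mul_nonneg (mul_nonneg hr0.le (by linarith)) (sq_nonneg _)
  have hE_ub : 2*a*r^2*(a^2*r-1)*(s+a*r) ≤ 8*a^2*r^2 := by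
    clear hσ h huD
    nlinarith [mul_nonneg (by positivity : (0:ℝ) ≤ 2*a^2*r^2)
        (by linarith : (0:ℝ) ≤ 4 - (s+a*r)*(a*r)),
      mul_nonneg (by positivity : (0:ℝ) ≤ 2*a*r^2) hu_pos.le]
  have hE_lb : 0 ≤ 2*a*r^2*(a^2*r-1)*(s+a*r) :=
    mul_nonneg (mul_nonneg (by positivity) (by linarith)) hu_pos.le
  have hv0 : 0 < (s+a*r)*(a*r) := mul_pos hu_pos (mul_pos ha hr0)
  have hv2 : ((s+a*r)*(a*r))^2 ≤ 16 := by
    have h16 := mul_le_mul hu4 hu4 hv0.le (by norm_num : (0:ℝ) ≤ 4)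
    calc ((s+a*r)*(a*r))^2 = ((s+a*r)*(a*r)) * ((s+a*r)*(a*r)) := sq _
      _ ≤ 4 * 4 := h16
      _ = 16 := by norm_num
  have hA_ub : r*(a^2*r-1)*(s+a*r)^2 ≤ 16 := by
    clear hσ h huD
    nlinarith [mul_nonneg hr0.le (sq_nonneg (s+a*r))]
  have hrsq : r ≤ r^2 := by clear hσ h huD; nlinarith
  have hrsq4 : (4:ℝ) ≤ r^2 := by clear hσ h huD; nlinarith
  have hPb_up : -a^2*r^2 + r^2 + r - r*(a^2*r-1)*(s+a*r)^2 + 2*a*r^2*(a^2*r-1)*(s+a*r)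
      ≤ (9*a^2+18)*r^2 := by
    clear hσ h huD
    nlinarith [sq_nonneg (a*r)]
  have hPb_lo : -((9*a^2+18)*r^2) ≤
      -a^2*r^2 + r^2 + r - r*(a^2*r-1)*(s+a*r)^2 + 2*a*r^2*(a^2*r-1)*(s+a*r) := by
    clear hσ h huD
    nlinarith [sq_nonneg (a*r)]
  set M := (s + a*r)*(a^3*r^3) - a^2*r^2 + r with hM
  have hP : M * (s^2 + r + 1) =
      -a^2*r^2 + r^2 + r - r*(a^2*r-1)*(s+a*r)^2 + 2*a*r^2*(a^2*r-1)*(s+a*r) := by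
    rw [hM]; linear_combination (a^3*r^3) * huD
  have hMD : |M| * (s^2 + r + 1) ≤ (9*a^2+18)*r^2 := by
    have h1 : |M| * (s^2 + r + 1) = |M * (s^2 + r + 1)| := by
      rw [abs_mul, abs_of_pos hD_pos]
    rw [h1, hP, abs_le]
    exact ⟨hPb_lo, hPb_up⟩
  have hMb : |M| * a^2 ≤ 36*a^2 + 72 := by
    have h2 : |M| * a^2 * r^2 ≤ (36*a^2 + 72) * r^2 := by
      nlinarith [mul_le_mul_of_nonneg_left hD_lb (abs_nonneg M)]
    exact le_of_mul_le_mul_right h2 (by positivity)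
  have hM2 : |M| ≤ (36*a^2+72)/a^2 := by
    rw [le_div_iff₀ (by positivity : (0:ℝ) < a^2)]
    exact hMb
  have key : s + a*r - 1/(a*r) + 1/(a^3*r^2) = M / (a^3*r^3) := by
    rw [hM]; field_simp
  rw [key, abs_div, abs_of_pos (show (0:ℝ) < a^3*r^3 by positivity)]
  calc |M| / (a^3*r^3) ≤ ((36*a^2+72)/a^2) / (a^3*r^3) := by gcongr
    _ = (36*a^2+72)/a^5 / r^3 := by rw [div_div, div_div]; ring_nf
end
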